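/- arXiv:1105.2924 — 8 statements merged into one kernel-verified Lean document; each statement's English description precedes it below -/
import Mathlib

section
/- Let d ≥ 2, let ℓ₁,…,ℓ_d be linear forms on ℝⁿ, and let e ∈ ℝⁿ satisfy ℓᵢ(e) = 1 for all i ∈ {1,…,d}. For x ∈ ℝⁿ define the symmetric (d−1)×(d−1) matrix M(x) by M(x)ᵢᵢ = ℓᵢ(x) + ℓ_d(x) for 1 ≤ i ≤ d−1 and M(x)ᵢⱼ = ℓ_d(x) for i ≠ j. Then for every x ∈ ℝⁿ, the matrix M(x) is positive semidefinite if and only if every real root t of the univariate polynomial t ↦ E_{d−1}(ℓ₁(x) + t, …, ℓ_d(x) + t) satisfies t ≤ 0. (That is, the spectrahedral cone {x : M(x) ⪰ 0} equals the first derivative cone of the polyhedral cone {x : ℓᵢ(x) ≥ 0 for all i} with respect to e.) -/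
/-- The `k`-th elementary symmetric function of `y : Fin d → ℝ`. -/
noncomputable def esymm {d : ℕ} (k : ℕ) (y : Fin d → ℝ) : ℝ :=
  ∑ s ∈ Finset.powersetCard k (Finset.univ : Finset (Fin d)), ∏ i ∈ s, y i

open Finset

lemma erase_comm' {α : Type*} [DecidableEq α] (s : Finset α) (a b : α) :
    (s.erase a).erase b = (s.erase b).erase a := by
  ext x; simp only [mem_erase]; tauto

/-- `E_{d-1}` is the sum over complements of singletons. -/
lemma esymm_pred {d : ℕ} (hd : 1 ≤ d) (w : Fin d → ℝ) :
    esymm (d - 1) w = ∑ j : Fin d, ∏ i ∈ univ.erase j, w i := by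
  unfold esymm
  have himg : Finset.powersetCard (d - 1) (univ : Finset (Fin d)) =
      univ.image (fun j : Fin d => univ.erase j) := by
    ext s
    simp only [mem_powersetCard, mem_image, mem_univ, true_and]
    constructor
    · rintro ⟨hs, hcard⟩
      have h1 : (univ \ s).card = 1 := by
        rw [card_sdiff_of_subset hs, card_univ, Fintype.card_fin, hcard]; omega
      obtain ⟨j, hj⟩ := Finset.card_eq_one.mp h1
      refine ⟨j, ?_⟩
      rw [Finset.erase_eq, ← hj, Finset.sdiff_sdiff_eq_self hs]
    · rintro ⟨j, rfl⟩
      refine ⟨erase_subset _ _, ?_⟩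
      rw [Finset.card_erase_of_mem (mem_univ j), card_univ, Fintype.card_fin]
  rw [himg, Finset.sum_image]
  intro a _ b _ h
  by_contra hne
  have hb : b ∈ univ.erase a := by simp [Ne.symm hne]
  rw [show univ.erase a = univ.erase b from h] at hb
  exact (Finset.notMem_erase b univ) hb

/-- Splitting `G z = ∑_j ∏_{i≠j} z i` at a distinguished index `i₀`. -/
lemma G_split {m : ℕ} (z : Fin (m + 2) → ℝ) (i₀ : Fin (m + 2)) :
    (∑ j, ∏ i ∈ univ.erase j, z i)
      = (∏ i ∈ univ.erase i₀, z i)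
        + z i₀ * ∑ k ∈ univ.erase i₀, ∏ i ∈ (univ.erase i₀).erase k, z i := by
  rw [← Finset.add_sum_erase univ _ (mem_univ i₀), Finset.mul_sum]
  congr 1
  refine Finset.sum_congr rfl fun j hj => ?_
  have hji₀ : j ≠ i₀ := (mem_erase.mp hj).1
  have hi₀mem : i₀ ∈ univ.erase j := mem_erase.mpr ⟨Ne.symm hji₀, mem_univ _⟩
  rw [← Finset.mul_prod_erase (univ.erase j) z hi₀mem, erase_comm']

lemma erase_nonempty {m : ℕ} (i₀ : Fin (m + 2)) : (univ.erase i₀).Nonempty := by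
  rw [← Finset.card_pos, Finset.card_erase_of_mem (mem_univ i₀), card_univ, Fintype.card_fin]
  omega

/-- If the quadratic form `∑ z i * v i ^ 2` is positive on nonzero vectors of the
hyperplane `∑ v = 0`, then `G z > 0`. -/
lemma form_pos_G_pos {m : ℕ} (z : Fin (m + 2) → ℝ)
    (h : ∀ v : Fin (m + 2) → ℝ, (∑ i, v i) = 0 → v ≠ 0 → 0 < ∑ i, z i * v i ^ 2) :
    0 < ∑ j, ∏ i ∈ univ.erase j, z i := by
  have hpos : ∀ j k : Fin (m + 2), j ≠ k → 0 < z j ∨ 0 < z k := by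
    intro j k hjk
    by_contra hc
    push_neg at hc
    obtain ⟨hzj, hzk⟩ := hc
    set v : Fin (m + 2) → ℝ := fun i => if i = j then 1 else if i = k then -1 else 0 with hvdef
    have hsupp : ∀ f : Fin (m + 2) → ℝ,
        (∀ i, i ≠ j → i ≠ k → f i = 0) → (∑ i, f i) = f j + f k := by
      intro f hf
      rw [← Finset.sum_subset (Finset.subset_univ {j, k})
        (fun i _ hi => by
          simp only [Finset.mem_insert, Finset.mem_singleton] at hi
          push_neg at hi
          exact hf i hi.1 hi.2)]
      exact Finset.sum_pair hjk
    have hv0 : (∑ i, v i) = 0 := by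
      rw [hsupp v (fun i h1 h2 => by simp [hvdef, h1, h2])]
      simp [hvdef, hjk, Ne.symm hjk]
    have hvne : v ≠ 0 := by
      intro hveq
      have : v j = 0 := by rw [hveq]; rfl
      simp [hvdef] at this
    have hform := h v hv0 hvne
    rw [hsupp (fun i => z i * v i ^ 2)
      (fun i h1 h2 => by simp [hvdef, h1, h2])] at hform
    simp only [hvdef, if_pos rfl, if_neg hjk, if_neg (Ne.symm hjk)] at hform
    nlinarith
  by_cases hall : ∀ i, 0 < z i
  · exact Finset.sum_pos
      (fun j _ => Finset.prod_pos fun i _ => hall i)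
      Finset.univ_nonempty
  · push_neg at hall
    obtain ⟨i₀, hi₀⟩ := hall
    have hi₀le : z i₀ ≤ 0 := hi₀
    have hk : ∀ k, k ≠ i₀ → 0 < z k := fun k hkne =>
      (hpos k i₀ hkne).resolve_right (not_lt.mpr hi₀)
    set A := univ.erase i₀ with hA
    have hApos : ∀ k ∈ A, 0 < z k := fun k hkA => hk k (mem_erase.mp hkA).1
    set T := ∑ k ∈ A, ∏ i ∈ A.erase k, z i with hT
    set P := ∏ i ∈ A, z i with hP
    have hTpos : 0 < T :=
      Finset.sum_pos (fun k hkA => Finset.prod_pos fun i hi =>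
        hApos i (Finset.mem_of_mem_erase hi)) (erase_nonempty i₀)
    set v : Fin (m + 2) → ℝ := fun i => if i = i₀ then -T else ∏ j ∈ A.erase i, z j
      with hvdef
    have hvA : ∀ k ∈ A, v k = ∏ j ∈ A.erase k, z j := fun k hkA => by
      simp [hvdef, (mem_erase.mp hkA).1]
    have hv0 : (∑ i, v i) = 0 := by
      rw [← Finset.add_sum_erase univ v (mem_univ i₀),
        Finset.sum_congr rfl hvA]
      simp [hvdef, hT]
    have hvne : v ≠ 0 := by
      obtain ⟨k, hkA⟩ := erase_nonempty (m := m) i₀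
      intro hveq
      have h1 : v k = 0 := by rw [hveq]; rfl
      rw [hvA k hkA] at h1
      exact absurd h1 (ne_of_gt (Finset.prod_pos fun i hi =>
        hApos i (Finset.mem_of_mem_erase hi)))
    have hform := h v hv0 hvne
    have hformval : (∑ i, z i * v i ^ 2) = z i₀ * T ^ 2 + P * T := by
      rw [← Finset.add_sum_erase univ _ (mem_univ i₀)]
      have : ∀ k ∈ A, z k * v k ^ 2 = P * ∏ j ∈ A.erase k, z j := by
        intro k hkA
        rw [hvA k hkA, hP, ← Finset.mul_prod_erase A z hkA]
        ring
      rw [Finset.sum_congr rfl this, ← Finset.mul_sum, ← hT]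
      simp [hvdef]
    rw [hformval] at hform
    rw [G_split z i₀, ← hA, ← hT, ← hP]
    nlinarith

/-- If at most one coordinate of `z` is nonpositive and `G z ≥ 0`, then the form
`∑ z i * v i ^ 2` is nonnegative on the hyperplane `∑ v = 0`. -/
lemma G_nonneg_form_nonneg {m : ℕ} (z : Fin (m + 2) → ℝ)
    (h1 : ∀ j k : Fin (m + 2), j ≠ k → 0 < z j ∨ 0 < z k)
    (h2 : 0 ≤ ∑ j, ∏ i ∈ univ.erase j, z i)
    (v : Fin (m + 2) → ℝ) (hv : (∑ i, v i) = 0) :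
    0 ≤ ∑ i, z i * v i ^ 2 := by
  by_cases hall : ∀ i, 0 ≤ z i
  · exact Finset.sum_nonneg fun i _ => mul_nonneg (hall i) (sq_nonneg _)
  push_neg at hall
  obtain ⟨i₀, hi₀⟩ := hall
  have hk : ∀ k, k ≠ i₀ → 0 < z k := fun k hkne =>
    (h1 k i₀ hkne).resolve_right (not_lt.mpr hi₀.le)
  set A := univ.erase i₀ with hA
  have hApos : ∀ k ∈ A, 0 < z k := fun k hkA => hk k (mem_erase.mp hkA).1
  set S := ∑ k ∈ A, (z k)⁻¹ with hS
  set Q := ∑ k ∈ A, z k * v k ^ 2 with hQ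
  set P := ∏ i ∈ A, z i with hP
  set T := ∑ k ∈ A, ∏ i ∈ A.erase k, z i with hT
  have hQ0 : 0 ≤ Q :=
    Finset.sum_nonneg fun k hkA => mul_nonneg (hApos k hkA).le (sq_nonneg _)
  have hS0 : 0 ≤ S := Finset.sum_nonneg fun k hkA => (inv_nonneg).mpr (hApos k hkA).le
  have hP0 : 0 < P := Finset.prod_pos hApos
  have hvi₀ : v i₀ = -∑ k ∈ A, v k := by
    have := Finset.add_sum_erase univ v (mem_univ i₀)
    rw [hv] at this
    linarith [this]
  -- Cauchy–Schwarz
  have hCS : (∑ k ∈ A, v k) ^ 2 ≤ Q * S := by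
    have := Finset.sum_mul_sq_le_sq_mul_sq A
      (fun k => Real.sqrt (z k) * v k) (fun k => (Real.sqrt (z k))⁻¹)
    have e1 : (∑ k ∈ A, (Real.sqrt (z k) * v k) * (Real.sqrt (z k))⁻¹) = ∑ k ∈ A, v k := by
      refine Finset.sum_congr rfl fun k hkA => ?_
      have hzk := hApos k hkA
      have hsq : Real.sqrt (z k) ≠ 0 := ne_of_gt (Real.sqrt_pos.mpr hzk)
      field_simp
    have e2 : (∑ k ∈ A, (Real.sqrt (z k) * v k) ^ 2) = Q := by
      refine Finset.sum_congr rfl fun k hkA => ?_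
      rw [mul_pow, Real.sq_sqrt (hApos k hkA).le]
    have e3 : (∑ k ∈ A, ((Real.sqrt (z k))⁻¹) ^ 2) = S := by
      refine Finset.sum_congr rfl fun k hkA => ?_
      rw [inv_pow, Real.sq_sqrt (hApos k hkA).le]
    rw [e1, e2, e3] at this
    exact this
  have hTPS : T = P * S := by
    rw [hT, hS, Finset.mul_sum]
    refine Finset.sum_congr rfl fun k hkA => ?_
    have hzk := hApos k hkA
    have := Finset.mul_prod_erase A z hkA
    rw [← hP] at this
    field_simp
    linarith [this]
  have hG : 0 ≤ P + z i₀ * T := by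
    rw [G_split z i₀, ← hA, ← hT, ← hP] at h2
    exact h2
  have h1S : 0 ≤ 1 + z i₀ * S := by
    rw [hTPS] at hG
    nlinarith
  have hsplit : (∑ i, z i * v i ^ 2) = z i₀ * v i₀ ^ 2 + Q := by
    rw [← Finset.add_sum_erase univ (fun i => z i * v i ^ 2) (mem_univ i₀)]
  have hvsq : v i₀ ^ 2 ≤ Q * S := by rw [hvi₀]; rw [neg_pow]; simpa using hCS
  have hmul : z i₀ * (Q * S) ≤ z i₀ * v i₀ ^ 2 :=
    mul_le_mul_of_nonpos_left hvsq hi₀.le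
  rw [hsplit]
  nlinarith [mul_nonneg hQ0 h1S]

/-- If `G (y + s) > 0` for all `s > 0`, then at most one coordinate of `y + t` is
nonpositive, for every `t > 0`. -/
lemma at_most_one_nonpos {m : ℕ} (y : Fin (m + 2) → ℝ)
    (hq : ∀ s : ℝ, 0 < s → 0 < ∑ j, ∏ i ∈ univ.erase j, (y i + s))
    {t : ℝ} (ht : 0 < t) : ∀ j k : Fin (m + 2), j ≠ k → 0 < y j + t ∨ 0 < y k + t := by
  intro j k hjk
  by_contra hc
  push_neg at hc
  obtain ⟨hcj, hck⟩ := hc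
  obtain ⟨j₀, -, hj₀⟩ := Finset.exists_min_image univ y ⟨j, mem_univ j⟩
  obtain ⟨k₀, hk₀A, hk₀⟩ := Finset.exists_min_image (univ.erase j₀) y (erase_nonempty j₀)
  have hj₀k₀ : j₀ ≠ k₀ := Ne.symm (mem_erase.mp hk₀A).1
  have hk₀t : y k₀ + t ≤ 0 := by
    rcases eq_or_ne j j₀ with rfl | hne
    · have hkmem : k ∈ univ.erase j := mem_erase.mpr ⟨Ne.symm hjk, mem_univ _⟩
      linarith [hk₀ k hkmem]
    · have hjmem : j ∈ univ.erase j₀ := mem_erase.mpr ⟨hne, mem_univ _⟩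
      linarith [hk₀ j hjmem]
  set s₀ := -y k₀ with hs₀def
  have hs₀ : 0 < s₀ := by simp only [hs₀def]; linarith
  have hcontra := hq s₀ hs₀
  have hzero : y k₀ + s₀ = 0 := by simp [hs₀def]
  have hsum : (∑ jj, ∏ i ∈ univ.erase jj, (y i + s₀))
      = ∏ i ∈ univ.erase k₀, (y i + s₀) := by
    rw [← Finset.add_sum_erase univ _ (mem_univ k₀)]
    have hz : (∑ jj ∈ univ.erase k₀, ∏ i ∈ univ.erase jj, (y i + s₀)) = 0 :=
      Finset.sum_eq_zero fun jj hjj =>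
        Finset.prod_eq_zero
          (mem_erase.mpr ⟨Ne.symm (mem_erase.mp hjj).1, mem_univ _⟩) hzero
    rw [hz, add_zero]
  have hj₀mem : j₀ ∈ univ.erase k₀ := mem_erase.mpr ⟨hj₀k₀, mem_univ _⟩
  rw [hsum, ← Finset.mul_prod_erase (univ.erase k₀) _ hj₀mem] at hcontra
  have h1 : y j₀ + s₀ ≤ 0 := by
    have := hj₀ k₀ (mem_univ k₀)
    simp only [hs₀def]; linarith
  have h2 : 0 ≤ ∏ i ∈ (univ.erase k₀).erase j₀, (y i + s₀) := by
    refine Finset.prod_nonneg fun i hi => ?_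
    have hi' : i ∈ univ.erase j₀ := mem_erase.mpr ⟨(mem_erase.mp hi).1, mem_univ _⟩
    have := hk₀ i hi'
    simp only [hs₀def]; linarith
  nlinarith

/-- IVT: if `G (y + t)` has no positive root then it is positive for positive `t`. -/
lemma pos_of_no_pos_root {m : ℕ} (y : Fin (m + 2) → ℝ)
    (h : ∀ t : ℝ, (∑ j, ∏ i ∈ univ.erase j, (y i + t)) = 0 → t ≤ 0) :
    ∀ t : ℝ, 0 < t → 0 < ∑ j, ∏ i ∈ univ.erase j, (y i + t) := by
  set q : ℝ → ℝ := fun t => ∑ j, ∏ i ∈ univ.erase j, (y i + t) with hqdef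
  have hcont : Continuous q :=
    continuous_finset_sum _ fun j _ =>
      continuous_finset_prod _ fun i _ => continuous_const.add continuous_id
  intro t ht
  by_contra hle
  push_neg at hle
  set T := t + 1 + ∑ i, |y i| with hTdef
  have habsnn : (0:ℝ) ≤ ∑ i, |y i| := Finset.sum_nonneg fun i _ => abs_nonneg _
  have hTt : t ≤ T := by simp only [hTdef]; linarith
  have hqT : 0 < q T := by
    refine Finset.sum_pos (fun j _ => Finset.prod_pos fun i _ => ?_) Finset.univ_nonempty
    have habs : |y i| ≤ ∑ i, |y i| :=
      Finset.single_le_sum (fun i _ => abs_nonneg (y i)) (mem_univ i)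
    have := neg_abs_le (y i)
    simp only [hTdef]
    linarith
  have hmem : (0:ℝ) ∈ Set.Icc (q t) (q T) := ⟨hle, hqT.le⟩
  obtain ⟨c, hc, hc0⟩ := intermediate_value_Icc hTt hcont.continuousOn hmem
  have := h c hc0
  linarith [hc.1]

lemma quad_form {m : ℕ} (a : Fin (m + 1) → ℝ) (c : ℝ) (w : Fin (m + 1) → ℝ) :
    dotProduct w ((Matrix.of fun i j : Fin (m + 1) => if i = j then a i + c else c).mulVec w)
      = (∑ i, a i * w i ^ 2) + c * (∑ i, w i) ^ 2 := by
  have key : ∀ i, (∑ j, (if i = j then a i + c else c) * w j)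
      = a i * w i + c * ∑ j, w j := by
    intro i
    have hterm : ∀ j, (if i = j then a i + c else c) * w j
        = (if i = j then a i * w j else 0) + c * w j := by
      intro j
      split_ifs with h
      · ring
      · ring
    rw [Finset.sum_congr rfl fun j _ => hterm j, Finset.sum_add_distrib,
      Finset.sum_ite_eq univ i (fun j => a i * w j), ← Finset.mul_sum]
    simp
  simp only [dotProduct, Matrix.mulVec, Matrix.of_apply]
  rw [Finset.sum_congr rfl fun i (_ : i ∈ univ) => by
    rw [show (∑ j, (if i = j then a i + c else c) * w j) = a i * w i + c * ∑ j, w j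
      from key i]]
  have : (∑ i, w i * (a i * w i + c * ∑ j, w j))
      = ∑ i, (a i * w i ^ 2 + (c * ∑ j, w j) * w i) := by
    refine Finset.sum_congr rfl fun i _ => by ring
  rw [this, Finset.sum_add_distrib, ← Finset.mul_sum]
  ring

lemma psd_iff {m : ℕ} (y : Fin (m + 2) → ℝ) :
    (Matrix.of fun i j : Fin (m + 1) =>
        if i = j then y i.castSucc + y (Fin.last (m + 1)) else y (Fin.last (m + 1))).PosSemidef
      ↔ ∀ v : Fin (m + 2) → ℝ, (∑ i, v i) = 0 → 0 ≤ ∑ i, y i * v i ^ 2 := by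
  set a : Fin (m + 1) → ℝ := fun i => y i.castSucc with ha
  set c : ℝ := y (Fin.last (m + 1)) with hc
  rw [Matrix.posSemidef_iff_dotProduct_mulVec]
  constructor
  · rintro ⟨-, hsd⟩ v hv
    set w : Fin (m + 1) → ℝ := fun i => v i.castSucc with hw
    have hlast : v (Fin.last (m + 1)) = -∑ i, w i := by
      rw [Fin.sum_univ_castSucc] at hv
      linarith [hv]
    have := hsd w
    rw [show star w = w from star_trivial w, quad_form a c w] at this
    rw [Fin.sum_univ_castSucc (f := fun i => y i * v i ^ 2), hlast]
    have : (0:ℝ) ≤ (∑ i, a i * w i ^ 2) + c * (∑ i, w i) ^ 2 := this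
    calc (0:ℝ) ≤ (∑ i, a i * w i ^ 2) + c * (∑ i, w i) ^ 2 := this
      _ = (∑ i : Fin (m + 1), y i.castSucc * v i.castSucc ^ 2)
          + y (Fin.last (m + 1)) * (-∑ i, w i) ^ 2 := by rw [neg_pow]; simp [ha, hc, hw]
  · intro h
    constructor
    · refine Matrix.IsHermitian.ext fun i j => ?_
      simp only [Matrix.of_apply, RCLike.star_def, starRingEnd_apply, star_trivial]
      rcases eq_or_ne i j with rfl | hne
      · rfl
      · rw [if_neg hne, if_neg (Ne.symm hne)]
    · intro w
      rw [show star w = w from star_trivial w, quad_form a c w]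
      set v : Fin (m + 2) → ℝ := Fin.snoc w (-(∑ i, w i)) with hv
      have hvc : ∀ i : Fin (m + 1), v i.castSucc = w i := fun i => Fin.snoc_castSucc _ _ i
      have hvl : v (Fin.last (m + 1)) = -(∑ i, w i) := Fin.snoc_last _ _
      have hv0 : (∑ i, v i) = 0 := by
        rw [Fin.sum_univ_castSucc (f := v), hvl, Finset.sum_congr rfl fun i _ => hvc i]
        ring
      have := h v hv0
      rw [Fin.sum_univ_castSucc (f := fun i => y i * v i ^ 2), hvl] at this
      calc (0:ℝ) ≤ (∑ i : Fin (m + 1), y i.castSucc * v i.castSucc ^ 2)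
            + y (Fin.last (m + 1)) * (-∑ i, w i) ^ 2 := this
        _ = (∑ i, a i * w i ^ 2) + c * (∑ i, w i) ^ 2 := by
            have hrw : (∑ i : Fin (m + 1), y i.castSucc * v i.castSucc ^ 2)
                = ∑ i : Fin (m + 1), y i.castSucc * w i ^ 2 :=
              Finset.sum_congr rfl fun i _ => by rw [hvc i]
            rw [neg_pow, hrw]
            simp only [ha, hc]
            ring

lemma main_equiv {m : ℕ} (y : Fin (m + 2) → ℝ) :
    (∀ v : Fin (m + 2) → ℝ, (∑ i, v i) = 0 → 0 ≤ ∑ i, y i * v i ^ 2)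
      ↔ ∀ t : ℝ, (∑ j, ∏ i ∈ univ.erase j, (y i + t)) = 0 → t ≤ 0 := by
  have hsplit : ∀ (t : ℝ) (v : Fin (m + 2) → ℝ), (∑ i, (y i + t) * v i ^ 2)
      = (∑ i, y i * v i ^ 2) + t * ∑ i, v i ^ 2 := by
    intro t v
    rw [Finset.mul_sum, ← Finset.sum_add_distrib]
    exact Finset.sum_congr rfl fun i _ => by ring
  constructor
  · intro h t hroot
    by_contra hpos
    push_neg at hpos
    have hgt : 0 < ∑ j, ∏ i ∈ univ.erase j, (y i + t) := by
      apply form_pos_G_pos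
      intro v hv hvne
      obtain ⟨jj, hjj⟩ : ∃ jj, v jj ≠ 0 := by
        by_contra hall; push_neg at hall; exact hvne (funext hall)
      have hvpos : 0 < ∑ i, v i ^ 2 :=
        Finset.sum_pos' (fun i _ => sq_nonneg _) ⟨jj, mem_univ jj, by positivity⟩
      have h0 := h v hv
      rw [hsplit t v]
      nlinarith
    exact absurd hroot (ne_of_gt hgt)
  · intro h v hv
    have hqpos := pos_of_no_pos_root y h
    have key : ∀ t : ℝ, 0 < t → 0 ≤ (∑ i, y i * v i ^ 2) + t * ∑ i, v i ^ 2 := by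
      intro t ht
      have h1 := at_most_one_nonpos y hqpos ht
      have h2 := (hqpos t ht).le
      have h3 := G_nonneg_form_nonneg (fun i => y i + t) h1 h2 v hv
      rw [hsplit t v] at h3
      exact h3
    by_contra hneg
    push_neg at hneg
    set F := ∑ i, y i * v i ^ 2 with hF
    set N := ∑ i, v i ^ 2 with hN
    have hN0 : 0 ≤ N := Finset.sum_nonneg fun i _ => sq_nonneg _
    have hN1 : (0:ℝ) < N + 1 := by linarith
    have ht : 0 < -F / (N + 1) := div_pos (by linarith) hN1
    have hkey := key (-F / (N + 1)) ht
    have hmul : 0 ≤ (F + -F / (N + 1) * N) * (N + 1) := mul_nonneg hkey hN1.le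
    have heq : (F + -F / (N + 1) * N) * (N + 1) = F := by
      field_simp
      ring
    rw [heq] at hmul
    linarith

/-- The spectrahedral cone `{x : M(x) ⪰ 0}` equals the first derivative cone
(the hyperbolicity cone of `E_{d-1}(ℓ₁(x),…,ℓ_d(x))` with respect to `e`) of the
polyhedral cone cut out by the linear forms `ℓ₁,…,ℓ_d`. -/
theorem stmt0 {n d : ℕ} (hd : 2 ≤ d) (ℓ : Fin d → ((Fin n → ℝ) →ₗ[ℝ] ℝ))
    (e : Fin n → ℝ) (he : ∀ i, ℓ i e = 1) (x : Fin n → ℝ) :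
    (Matrix.of fun i j : Fin (d - 1) =>
        if i = j then
          ℓ (Fin.castLE (by omega) i) x + ℓ ⟨d - 1, by omega⟩ x
        else ℓ ⟨d - 1, by omega⟩ x).PosSemidef ↔
      ∀ t : ℝ, esymm (d - 1) (fun i => ℓ i x + t) = 0 → t ≤ 0 := by
  obtain ⟨m, rfl⟩ : ∃ m, d = m + 2 := ⟨d - 2, by omega⟩
  refine ((psd_iff (fun i => ℓ i x)).trans
    ((main_equiv (fun i => ℓ i x)).trans ?_))
  exact forall_congr' fun t => by
    rw [esymm_pred (show 1 ≤ m + 2 by omega) (fun i => ℓ i x + t)]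
end

section
/- Let p ∈ ℝ[x₁,…,xₙ] be a homogeneous polynomial of degree d ≥ 1 that is hyperbolic with respect to e ∈ ℝⁿ, i.e., p(e) > 0 and for every q ∈ ℝⁿ the univariate polynomial λ ↦ p(q + λe) has only real roots. Then the directional derivative D_e p = Σⱼ eⱼ ∂p/∂xⱼ is hyperbolic with respect to e: (D_e p)(e) = d · p(e) > 0, and for every q ∈ ℝⁿ the univariate polynomial λ ↦ (D_e p)(q + λe) has only real roots. -/
open Polynomial

/-- The restriction of a multivariate polynomial `p` to the line `λ ↦ x + λ e`,
as a univariate polynomial in `λ`. -/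
noncomputable def lineRestrict {n : ℕ} (p : MvPolynomial (Fin n) ℝ)
    (x e : Fin n → ℝ) : Polynomial ℝ :=
  MvPolynomial.aeval (fun i => Polynomial.C (x i) + Polynomial.C (e i) * Polynomial.X) p

theorem lr_deriv {n : ℕ} (p : MvPolynomial (Fin n) ℝ) (q e : Fin n → ℝ) :
    lineRestrict (∑ j, e j • MvPolynomial.pderiv j p) q e
      = derivative (lineRestrict p q e) := by
  unfold lineRestrict
  induction p using MvPolynomial.induction_on with
  | C a => simp [MvPolynomial.pderiv_C]
  | add p1 p2 h1 h2 =>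
      simp only [map_add, Finset.sum_add_distrib, smul_add, derivative_add] at *
      rw [h1, h2]
  | mul_X p1 i ih =>
      have key : (∑ j, e j • MvPolynomial.pderiv j (p1 * MvPolynomial.X i))
          = (∑ j, e j • MvPolynomial.pderiv j p1) * MvPolynomial.X i + e i • p1 := by
        have h2 : (∑ j : Fin n, e j • (p1 * MvPolynomial.pderiv j (MvPolynomial.X i)))
            = e i • p1 := by
          rw [Finset.sum_eq_single i]
          · rw [MvPolynomial.pderiv_X_self, mul_one]
          · intro b _ hb
            rw [MvPolynomial.pderiv_X_of_ne (Ne.symm hb), mul_zero, smul_zero]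
          · intro h; exact absurd (Finset.mem_univ i) h
        simp only [MvPolynomial.pderiv_mul, smul_add, Finset.sum_add_distrib, h2,
          Finset.sum_smul, smul_mul_assoc, ← Finset.sum_mul]
        rw [Finset.sum_mul]
        simp [smul_mul_assoc]
      rw [key, map_add, map_mul, MvPolynomial.aeval_X, ih, map_mul, derivative_mul]
      have : (MvPolynomial.aeval fun i => C (q i) + C (e i) * X) (e i • p1)
          = C (e i) * (MvPolynomial.aeval fun i => C (q i) + C (e i) * X) p1 := by
        rw [show (e i • p1) = MvPolynomial.C (e i) * p1 by
          rw [MvPolynomial.smul_eq_C_mul], map_mul, MvPolynomial.aeval_C]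
        rfl
      rw [this]
      simp only [MvPolynomial.aeval_X, derivative_add, derivative_C, zero_add,
        derivative_mul, derivative_X, mul_one]
      ring

theorem lr_eval {n : ℕ} (p : MvPolynomial (Fin n) ℝ) (x e : Fin n → ℝ) (t : ℝ) :
    Polynomial.eval t (lineRestrict p x e) = MvPolynomial.eval (fun i => x i + e i * t) p := by
  unfold lineRestrict
  induction p using MvPolynomial.induction_on with
  | C a => simp
  | add p1 p2 h1 h2 => simp [h1, h2]
  | mul_X p1 i ih => simp [ih]

-- helper: coeff of product at sum of degree bounds

theorem coeff_prod' {ι : Type*} (s : Finset ι) (F : ι → Polynomial ℝ) (k : ι → ℕ)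
    (h : ∀ i ∈ s, natDegree (F i) ≤ k i) :
    (∏ i ∈ s, F i).coeff (∑ i ∈ s, k i) = ∏ i ∈ s, (F i).coeff (k i) := by
  classical
  induction s using Finset.induction_on with
  | empty => simp
  | insert a s hx ih =>
      rw [Finset.prod_insert hx, Finset.prod_insert hx, Finset.sum_insert hx,
        coeff_mul_add_eq_of_natDegree_le (h a (Finset.mem_insert_self a s))
          (natDegree_prod_le s F |>.trans (Finset.sum_le_sum fun i hi =>
            h i (Finset.mem_insert_of_mem hi))),
        ih fun i hi => h i (Finset.mem_insert_of_mem hi)]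

theorem lin_natDegree {a b : ℝ} : natDegree (C a + C b * X) ≤ 1 := by
  apply (natDegree_add_le _ _).trans
  simp [natDegree_C_mul_le]
  exact (natDegree_C_mul_le b X).trans (by simp)

theorem lin_pow_coeff {a b : ℝ} (k : ℕ) : ((C a + C b * X) ^ k).coeff k = b ^ k := by
  induction k with
  | zero => simp
  | succ m ih =>
      have hdeg : natDegree ((C a + C b * X) ^ m) ≤ m :=
        (natDegree_pow_le).trans (by
          calc m * (C a + C b * X).natDegree ≤ m * 1 :=
                Nat.mul_le_mul_left m lin_natDegree
            _ = m := Nat.mul_one m)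
      rw [pow_succ, coeff_mul_add_eq_of_natDegree_le hdeg lin_natDegree, ih]
      have : (C a + C b * X).coeff 1 = b := by simp
      rw [this, pow_succ]

theorem mono_degree {n : ℕ} {p : MvPolynomial (Fin n) ℝ} {d : ℕ}
    (hhom : p.IsHomogeneous d) {m : Fin n →₀ ℕ} (hm : m ∈ p.support) :
    ∑ i, m i = d := by
  have h1 : m.degree = d := by
    by_contra h
    exact MvPolynomial.mem_support_iff.mp hm (hhom.coeff_eq_zero h)
  rw [← h1, Finsupp.degree]
  exact (Finset.sum_subset (Finset.subset_univ _)
    (fun i _ hi => Finsupp.notMem_support_iff.mp hi)).symm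

theorem lr_natDegree_le {n : ℕ} {p : MvPolynomial (Fin n) ℝ} {d : ℕ}
    (hhom : p.IsHomogeneous d) (q e : Fin n → ℝ) :
    natDegree (lineRestrict p q e) ≤ d := by
  unfold lineRestrict
  rw [← p.support_sum_monomial_coeff, map_sum]
  apply (natDegree_sum_le _ _).trans
  rw [Finset.fold_max_le]
  refine ⟨Nat.zero_le d, fun m hm => ?_⟩
  rw [Function.comp, MvPolynomial.aeval_monomial, Finsupp.prod_pow]
  apply (natDegree_mul_le).trans
  have : natDegree ((algebraMap ℝ ℝ[X]) (MvPolynomial.coeff m p)) = 0 := natDegree_C _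
  rw [this, zero_add]
  apply (natDegree_prod_le _ _).trans
  rw [← mono_degree hhom hm]
  exact Finset.sum_le_sum fun i _ => (natDegree_pow_le).trans
    (by calc (m i) * (C (q i) + C (e i) * X).natDegree ≤ m i * 1 :=
          Nat.mul_le_mul_left _ lin_natDegree
      _ = m i := Nat.mul_one _)

theorem lr_coeff_d {n : ℕ} {p : MvPolynomial (Fin n) ℝ} {d : ℕ}
    (hhom : p.IsHomogeneous d) (q e : Fin n → ℝ) :
    (lineRestrict p q e).coeff d = MvPolynomial.eval e p := by
  unfold lineRestrict
  conv_lhs => rw [← p.support_sum_monomial_coeff]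
  rw [map_sum, finset_sum_coeff, MvPolynomial.eval_eq']
  apply Finset.sum_congr rfl
  intro m hm
  rw [MvPolynomial.aeval_monomial, Finsupp.prod_pow, Polynomial.algebraMap_eq,
    coeff_C_mul, ← mono_degree hhom hm,
    coeff_prod' _ _ _ (fun i _ => (natDegree_pow_le).trans
      (by calc (m i) * (C (q i) + C (e i) * X).natDegree ≤ m i * 1 :=
            Nat.mul_le_mul_left _ lin_natDegree
        _ = m i := Nat.mul_one _))]
  congr 1
  exact Finset.prod_congr rfl fun i _ => lin_pow_coeff (m i)

theorem lr_zero {n : ℕ} {p : MvPolynomial (Fin n) ℝ} {d : ℕ}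
    (hhom : p.IsHomogeneous d) (e : Fin n → ℝ) :
    lineRestrict p (0 : Fin n → ℝ) e = C (MvPolynomial.eval e p) * X ^ d := by
  unfold lineRestrict
  conv_lhs => rw [← p.support_sum_monomial_coeff]
  rw [map_sum, MvPolynomial.eval_eq', map_sum, Finset.sum_mul]
  apply Finset.sum_congr rfl
  intro m hm
  rw [MvPolynomial.aeval_monomial, Finsupp.prod_pow]
  have : ∀ i : Fin n, (C ((0 : Fin n → ℝ) i) + C (e i) * X) ^ m i
      = C (e i ^ m i) * X ^ m i := by
    intro i; simp [mul_pow, C_pow]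
  simp only [this]
  rw [Finset.prod_mul_distrib, Finset.prod_pow_eq_pow_sum, mono_degree hhom hm,
    Polynomial.algebraMap_eq, ← map_prod, ← mul_assoc, ← C_mul]

/-- If `p` is homogeneous of degree `d ≥ 1` and hyperbolic with respect to `e`
(`p(e) > 0` and all restrictions along `e` are real rooted), then the directional
derivative `D_e p = Σⱼ eⱼ ∂p/∂xⱼ` is hyperbolic with respect to `e`:
`(D_e p)(e) = d ⬝ p(e) > 0` and all restrictions of `D_e p` along `e` are real
rooted. -/
theorem stmt4 {n : ℕ} (p : MvPolynomial (Fin n) ℝ) (d : ℕ) (hd : 1 ≤ d)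
    (hhom : p.IsHomogeneous d) (e : Fin n → ℝ)
    (hpos : 0 < MvPolynomial.eval e p)
    (hreal : ∀ q : Fin n → ℝ, ∀ z : ℂ,
      Polynomial.aeval z (lineRestrict p q e) = 0 → z.im = 0) :
    MvPolynomial.eval e (∑ j, e j • MvPolynomial.pderiv j p)
        = (d : ℝ) * MvPolynomial.eval e p ∧
    0 < MvPolynomial.eval e (∑ j, e j • MvPolynomial.pderiv j p) ∧
    ∀ q : Fin n → ℝ, ∀ z : ℂ,
      Polynomial.aeval z
        (lineRestrict (∑ j, e j • MvPolynomial.pderiv j p) q e) = 0 → z.im = 0 := by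
  classical
  set S := ∑ j, e j • MvPolynomial.pderiv j p with hS
  -- Part 1 : Euler identity
  have heuler : MvPolynomial.eval e S = (d : ℝ) * MvPolynomial.eval e p := by
    have h0 : MvPolynomial.eval e S
        = Polynomial.eval 1 (lineRestrict S (0 : Fin n → ℝ) e) := by
      rw [lr_eval]
      have : (fun i => (0 : Fin n → ℝ) i + e i * 1) = e := by funext i; simp
      rw [this]
    rw [h0, lr_deriv, lr_zero hhom, derivative_C_mul, derivative_X_pow]
    simp [mul_comm]
  refine ⟨heuler, ?_, ?_⟩
  · rw [heuler]
    exact mul_pos (by exact_mod_cast Nat.lt_of_lt_of_le Nat.zero_lt_one hd) hpos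
  -- Part 3 : real-rootedness of the derivative
  intro q z hz
  set g := lineRestrict p q e with hg
  have hcoeff : g.coeff d = MvPolynomial.eval e p := lr_coeff_d hhom q e
  have hgne : g ≠ 0 := fun h => by simp [h, hpos.ne'] at hcoeff; exact hpos.ne' hcoeff.symm
  have hgdeg : g.natDegree = d :=
    le_antisymm (lr_natDegree_le hhom q e)
      (le_natDegree_of_ne_zero (by rw [hcoeff]; exact hpos.ne'))
  set g' := derivative g with hg'
  have hlrS : lineRestrict S q e = g' := lr_deriv p q e
  have hg'coeff : g'.coeff (d - 1) = MvPolynomial.eval e p * d := by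
    rw [hg', coeff_derivative, Nat.sub_add_cancel hd, hcoeff]
    push_cast [Nat.cast_sub hd]
    ring
  have hg'ne : g' ≠ 0 := fun h => by
    rw [h, coeff_zero] at hg'coeff
    exact (mul_ne_zero hpos.ne' (by exact_mod_cast (Nat.one_le_iff_ne_zero.mp hd))) hg'coeff.symm
  have hg'deg : g'.natDegree = d - 1 :=
    le_antisymm (by have h := natDegree_derivative_le g; rw [hgdeg] at h; exact h)
      (le_natDegree_of_ne_zero (by
        rw [hg'coeff]
        exact mul_ne_zero hpos.ne' (by exact_mod_cast (Nat.one_le_iff_ne_zero.mp hd))))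
  have inj : Function.Injective (algebraMap ℝ ℂ) := (algebraMap ℝ ℂ).injective
  set G := g.map (algebraMap ℝ ℂ) with hG
  have hGne : G ≠ 0 := (Polynomial.map_ne_zero_iff inj).mpr hgne
  have hGdeg : G.natDegree = d := by rw [hG, natDegree_map_eq_of_injective inj, hgdeg]
  have hGcard : Multiset.card G.roots = d := by
    rw [splits_iff_card_roots.mp (IsAlgClosed.splits G), hGdeg]
  -- every complex root of G is real, so G.roots ≤ g.roots.map coe
  have hle : G.roots ≤ g.roots.map (algebraMap ℝ ℂ) := by
    rw [Multiset.le_iff_count]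
    intro w
    by_cases hw : w ∈ G.roots
    · have hw0 : Polynomial.aeval w g = 0 := by
        rw [aeval_def, eval₂_eq_eval_map]
        exact (mem_roots hGne).mp hw
      have him : w.im = 0 := hreal q w hw0
      have hwr : (algebraMap ℝ ℂ) w.re = w := Complex.ext (by simp) (by simp [him])
      rw [← hwr, Multiset.count_map_eq_count' _ _ inj, count_roots, count_roots,
        eq_rootMultiplicity_map inj w.re]
    · rw [Multiset.count_eq_zero_of_notMem hw]
      exact Nat.zero_le _
  have hgcard : Multiset.card g.roots = d :=
    le_antisymm (hgdeg ▸ card_roots' g)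
      (by rw [← hGcard]; simpa using Multiset.card_le_card hle)
  have hg'card : Multiset.card g'.roots = d - 1 :=
    le_antisymm (hg'deg ▸ card_roots' g')
      (by have h := card_roots_le_derivative g; rw [← hg'] at h; omega)
  set G' := g'.map (algebraMap ℝ ℂ) with hG'
  have hG'ne : G' ≠ 0 := (Polynomial.map_ne_zero_iff inj).mpr hg'ne
  have hG'card : Multiset.card G'.roots = d - 1 := by
    rw [splits_iff_card_roots.mp (IsAlgClosed.splits G'),
      natDegree_map_eq_of_injective inj, hg'deg]
  have heq : g'.roots.map (algebraMap ℝ ℂ) = G'.roots :=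
    Multiset.eq_of_le_of_card_le (map_roots_le_of_injective g' inj)
      (by rw [hG'card, Multiset.card_map, hg'card])
  -- finish
  rw [hlrS] at hz
  have hzG' : z ∈ G'.roots := by
    rw [mem_roots hG'ne]
    rwa [IsRoot, ← eval₂_eq_eval_map, ← aeval_def]
  rw [← heq] at hzG'
  obtain ⟨r, _, hrz⟩ := Multiset.mem_map.mp hzG'
  rw [← hrz]
  simp
end

section
/- Let p ∈ ℝ[x₁,…,xₙ] be homogeneous of degree d ≥ 1 and hyperbolic with respect to e ∈ ℝⁿ, and let x ∈ ℝⁿ. If every real root λ of the univariate polynomial λ ↦ p(x + λe) satisfies λ ≤ 0, then every real root λ of λ ↦ (D_e p)(x + λe) also satisfies λ ≤ 0. (In other words, the hyperbolicity cone of p is contained in the derivative cone: Λ₊(p, e) ⊆ Λ₊(D_e p, e), so the derivative cone is a relaxation of the original cone.) -/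
open Polynomial

private lemma coeff_prod_of_natDegree_le' {ι : Type*} (s : Finset ι) (g : ι → Polynomial ℝ)
    (m : ι → ℕ) (h : ∀ i ∈ s, (g i).natDegree ≤ m i) :
    (∏ i ∈ s, g i).coeff (∑ i ∈ s, m i) = ∏ i ∈ s, (g i).coeff (m i) := by
  classical
  induction s using Finset.cons_induction with
  | empty => simp
  | cons a s ha ih =>
    rw [Finset.prod_cons, Finset.sum_cons, Finset.prod_cons,
      Polynomial.coeff_mul_add_eq_of_natDegree_le (h a (Finset.mem_cons_self a s))
        ((Polynomial.natDegree_prod_le s g).trans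
          (Finset.sum_le_sum fun i hi => h i (Finset.mem_cons_of_mem hi))),
      ih fun i hi => h i (Finset.mem_cons_of_mem hi)]

private lemma natDegree_base_le {a b : ℝ} : (C a + C b * X).natDegree ≤ 1 := by
  rw [add_comm]; exact natDegree_linear_le

private lemma lineRestrict_coeff {n : ℕ} (p : MvPolynomial (Fin n) ℝ) (d : ℕ)
    (hhom : p.IsHomogeneous d) (x e : Fin n → ℝ) :
    (lineRestrict p x e).coeff d = MvPolynomial.eval e p := by
  classical
  rw [lineRestrict, MvPolynomial.eval_eq]
  conv_lhs => rw [MvPolynomial.as_sum p]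
  rw [map_sum, Polynomial.finset_sum_coeff]
  refine Finset.sum_congr rfl fun α hα => ?_
  have hsum : ∑ i ∈ α.support, α i = d := by
    have := hhom (MvPolynomial.mem_support_iff.mp hα)
    simpa [Finsupp.weight_apply, Finsupp.sum] using this
  rw [MvPolynomial.aeval_monomial]
  have : (algebraMap ℝ (Polynomial ℝ)) (MvPolynomial.coeff α p) =
      C (MvPolynomial.coeff α p) := rfl
  rw [this, Polynomial.coeff_C_mul]
  congr 1
  have hprod : (α.prod fun i k => (C (x i) + C (e i) * X) ^ k) =
      ∏ i ∈ α.support, (C (x i) + C (e i) * X) ^ (α i) := rfl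
  rw [hprod, ← hsum, coeff_prod_of_natDegree_le']
  · refine Finset.prod_congr rfl fun i _ => ?_
    have h1 : ((C (x i) + C (e i) * X) ^ (α i)).coeff (α i * 1) =
        (C (x i) + C (e i) * X).coeff 1 ^ (α i) :=
      Polynomial.coeff_pow_of_natDegree_le natDegree_base_le
    simpa using h1
  · intro i _
    have h1 : (C (x i) + C (e i) * X).natDegree ≤ 1 := natDegree_base_le
    calc ((C (x i) + C (e i) * X) ^ α i).natDegree
        ≤ α i * (C (x i) + C (e i) * X).natDegree := Polynomial.natDegree_pow_le
      _ ≤ α i * 1 := Nat.mul_le_mul_left _ h1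
      _ = α i := mul_one _

private lemma lineRestrict_deriv {n : ℕ} (p : MvPolynomial (Fin n) ℝ) (x e : Fin n → ℝ) :
    lineRestrict (∑ j, e j • MvPolynomial.pderiv j p) x e =
      derivative (lineRestrict p x e) := by
  classical
  induction p using MvPolynomial.induction_on with
  | C a => simp [lineRestrict]
  | add p q hp hq =>
    simp only [map_add, Finset.sum_add_distrib, smul_add] at *
    simp [lineRestrict, map_add] at *
    rw [hp, hq]
  | mul_X p i hp =>
    have hstep : (∑ j, e j • MvPolynomial.pderiv j (p * MvPolynomial.X i)) =
        (∑ j, e j • MvPolynomial.pderiv j p) * MvPolynomial.X i + e i • p := by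
      have : ∀ j, MvPolynomial.pderiv j (p * MvPolynomial.X i) =
          MvPolynomial.pderiv j p * MvPolynomial.X i +
            p * (if i = j then 1 else 0) := by
        intro j
        rw [MvPolynomial.pderiv_mul, MvPolynomial.pderiv_X]
        congr 1
        by_cases h : i = j <;> simp [Pi.single_apply, h, eq_comm]
      simp only [this, smul_add, Finset.sum_add_distrib]
      congr 1
      · rw [Finset.sum_mul]
        exact Finset.sum_congr rfl fun j _ => (smul_mul_assoc _ _ _).symm
      · simp [mul_ite, smul_ite, Finset.sum_ite_eq]
    rw [hstep]
    simp only [lineRestrict, map_add, map_mul, MvPolynomial.aeval_X] at *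
    rw [hp]
    have : MvPolynomial.aeval
        (fun i => C (x i) + C (e i) * X) (e i • p) =
        C (e i) * MvPolynomial.aeval (fun i => C (x i) + C (e i) * X) p := by
      rw [MvPolynomial.smul_eq_C_mul, map_mul, MvPolynomial.aeval_C]
      rfl
    rw [this, derivative_mul]
    ring_nf
    simp [derivative_mul]
    ring

private lemma multiset_prod_pos (t : ℝ) (ht : 0 < t) (s : Multiset ℝ)
    (hs : ∀ r ∈ s, r ≤ 0) :
    0 < ((s.map fun r => X - C r).prod).eval t ∧
      0 ≤ (derivative ((s.map fun r => X - C r).prod)).eval t ∧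
      (s ≠ 0 → 0 < (derivative ((s.map fun r => X - C r).prod)).eval t) := by
  classical
  induction s using Multiset.induction with
  | empty => simp
  | cons a s ih =>
    have ha : a ≤ 0 := hs a (Multiset.mem_cons_self a s)
    have hs' : ∀ r ∈ s, r ≤ 0 := fun r hr => hs r (Multiset.mem_cons_of_mem hr)
    obtain ⟨h1, h2, _⟩ := ih hs'
    have hta : 0 < t - a := by linarith
    constructor
    · rw [Multiset.map_cons, Multiset.prod_cons]
      simp only [eval_mul, eval_sub, eval_X, eval_C]
      positivity
    constructor
    · rw [Multiset.map_cons, Multiset.prod_cons, derivative_mul]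
      simp only [eval_add, eval_mul, eval_sub, eval_X, eval_C, derivative_sub,
        derivative_X, derivative_C, sub_zero, eval_one, one_mul]
      nlinarith
    · intro _
      rw [Multiset.map_cons, Multiset.prod_cons, derivative_mul]
      simp only [eval_add, eval_mul, eval_sub, eval_X, eval_C, derivative_sub,
        derivative_X, derivative_C, sub_zero, eval_one, one_mul]
      nlinarith

/-- The hyperbolicity cone of a hyperbolic polynomial `p` is contained in the
hyperbolicity cone of its directional derivative `D_e p`: if every real root of
`λ ↦ p(x + λe)` is nonpositive, then so is every real root of
`λ ↦ (D_e p)(x + λe)`. -/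
theorem stmt5 {n : ℕ} (p : MvPolynomial (Fin n) ℝ) (d : ℕ) (hd : 1 ≤ d)
    (hhom : p.IsHomogeneous d) (e : Fin n → ℝ)
    (hpos : 0 < MvPolynomial.eval e p)
    (hreal : ∀ q : Fin n → ℝ, ∀ z : ℂ,
      Polynomial.aeval z (lineRestrict p q e) = 0 → z.im = 0)
    (x : Fin n → ℝ)
    (hx : ∀ t : ℝ, Polynomial.eval t (lineRestrict p x e) = 0 → t ≤ 0) :
    ∀ t : ℝ,
      Polynomial.eval t (lineRestrict (∑ j, e j • MvPolynomial.pderiv j p) x e) = 0 →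
        t ≤ 0 := by
  classical
  set f := lineRestrict p x e with hf
  have hcoeff : f.coeff d = MvPolynomial.eval e p := lineRestrict_coeff p d hhom x e
  have hcne : f.coeff d ≠ 0 := by rw [hcoeff]; exact ne_of_gt hpos
  have hdle : d ≤ f.natDegree := le_natDegree_of_ne_zero hcne
  have hfne : f ≠ 0 := fun h => hcne (by simp [h])
  -- complexify
  set g : ℝ →+* ℂ := algebraMap ℝ ℂ
  have hginj : Function.Injective g := g.injective
  set F := f.map g with hF
  have hFne : F ≠ 0 := (Polynomial.map_ne_zero_iff hginj).mpr hfne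
  have hsplits : F.Splits := IsAlgClosed.splits F
  -- roots of F are real and nonpositive
  have hroot_re : ∀ z ∈ F.roots, z = ((z.re : ℝ) : ℂ) ∧ z.re ≤ 0 := by
    intro z hz
    have hev : F.eval z = 0 := (Polynomial.isRoot_of_mem_roots hz)
    have haev : Polynomial.aeval z f = 0 := by
      rw [Polynomial.aeval_def, ← Polynomial.eval_map]; exact hev
    have him : z.im = 0 := hreal x z haev
    have hzeq : z = ((z.re : ℝ) : ℂ) := by
      apply Complex.ext <;> simp [him]
    have hre_root : f.eval z.re = 0 := by
      have : F.eval ((g (z.re))) = g (f.eval z.re) := by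
        rw [hF, Polynomial.eval_map, Polynomial.eval₂_at_apply]
      have h2 : F.eval ((z.re : ℝ) : ℂ) = 0 := by rw [← hzeq]; exact hev
      have h3 : g (f.eval z.re) = 0 := by rw [← this]; exact h2
      exact hginj (by simpa using h3)
    exact ⟨hzeq, hx z.re hre_root⟩
  -- the multiset of real roots
  set s : Multiset ℝ := F.roots.map Complex.re with hsdef
  have hs_le : ∀ r ∈ s, r ≤ 0 := by
    intro r hr
    obtain ⟨z, hz, rfl⟩ := Multiset.mem_map.mp hr
    exact (hroot_re z hz).2
  have hcard : Multiset.card s = f.natDegree := by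
    rw [hsdef, Multiset.card_map, (Polynomial.splits_iff_card_roots).mp hsplits, hF,
      Polynomial.natDegree_map_eq_of_injective hginj]
  have hsne : s ≠ 0 := by
    intro h0
    rw [h0] at hcard
    simp at hcard
    omega
  -- factorization of f over ℝ
  have hfact : f = C f.leadingCoeff * (s.map fun r => X - C r).prod := by
    apply Polynomial.map_injective g hginj
    rw [Polynomial.map_mul, Polynomial.map_C]
    have hmapprod : ((s.map fun r => X - C r).prod).map g =
        ((s.map fun r => X - C (g r)).prod) := by
      rw [Polynomial.map_multiset_prod, Multiset.map_map]
      exact congrArg _ (Multiset.map_congr rfl fun r _ => by simp)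
    have hlead : g f.leadingCoeff = F.leadingCoeff := (Polynomial.leadingCoeff_map_of_injective hginj f).symm
    rw [hmapprod, hlead]
    calc map g f = F := hF.symm
      _ = C F.leadingCoeff * (F.roots.map fun z => X - C z).prod :=
          hsplits.eq_prod_roots
      _ = C F.leadingCoeff * ((s.map fun r => X - C (g r)).prod) := by
          congr 1
          rw [hsdef, Multiset.map_map]
          refine congrArg Multiset.prod (Multiset.map_congr rfl fun z hz => ?_)
          simp only [Function.comp_apply]
          congr 1
          conv_lhs => rw [(hroot_re z hz).1]
          rfl
  have hlc_ne : f.leadingCoeff ≠ 0 := Polynomial.leadingCoeff_ne_zero.mpr hfne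
  -- conclusion
  intro t hroot
  by_contra hle
  push_neg at hle
  obtain ⟨_, _, h3⟩ := multiset_prod_pos t hle s hs_le
  have hpos' := h3 hsne
  have hderiv : lineRestrict (∑ j, e j • MvPolynomial.pderiv j p) x e = derivative f :=
    lineRestrict_deriv p x e
  rw [hderiv] at hroot
  rw [hfact] at hroot
  rw [derivative_C_mul] at hroot
  simp only [eval_mul, eval_C] at hroot
  rcases mul_eq_zero.mp hroot with h | h
  · exact hlc_ne h
  · exact (ne_of_gt hpos') h
end

section
/- Let 0 ≤ k ≤ n and let E_k denote the k-th elementary symmetric polynomial in n variables. For every subset I ⊆ {1,…,n}, the multiplicity of 0 as a root of the univariate polynomial λ ↦ E_k(χ_I + λ𝟙) equals max(0, k − |I|); equivalently, k − mult₀(λ ↦ E_k(χ_I + λ𝟙)) = min(k, |I|). (Thus the polymatroid associated to E_k with respect to e = 𝟙 is exactly the uniform matroid U_{k,n}.) -/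
open Polynomial

/-- The polymatroid associated to the elementary symmetric polynomial `E_k`
with respect to `𝟙` is the uniform matroid `U_{k,n}`: for every `I ⊆ [n]`, the
multiplicity of `0` as a root of `λ ↦ E_k(χ_I + λ𝟙)` is `max(0, k - |I|)`
(which is the truncated subtraction `k - |I|` in `ℕ`); equivalently,
`k - mult₀ = min(k, |I|)`. -/
theorem stmt7 {n k : ℕ} (hkn : k ≤ n) (I : Finset (Fin n)) :
    Polynomial.rootMultiplicity 0
        (∑ s ∈ Finset.powersetCard k (Finset.univ : Finset (Fin n)),
          ∏ i ∈ s, (Polynomial.C (if i ∈ I then (1 : ℝ) else 0) + Polynomial.X))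
      = k - I.card ∧
    k - Polynomial.rootMultiplicity 0
        (∑ s ∈ Finset.powersetCard k (Finset.univ : Finset (Fin n)),
          ∏ i ∈ s, (Polynomial.C (if i ∈ I then (1 : ℝ) else 0) + Polynomial.X))
      = min k I.card := by
  classical
  set c := I.card with hc
  set m := k - c with hm
  set P : ℝ[X] := ∑ s ∈ Finset.powersetCard k (Finset.univ : Finset (Fin n)),
      ∏ i ∈ s, (Polynomial.C (if i ∈ I then (1 : ℝ) else 0) + Polynomial.X) with hP
  have hcn : c ≤ n := by
    simpa [hc] using Finset.card_le_card (Finset.subset_univ I)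
  -- rewrite each summand as a product of powers
  have key : ∀ s ∈ Finset.powersetCard k (Finset.univ : Finset (Fin n)),
      (∏ i ∈ s, (Polynomial.C (if i ∈ I then (1 : ℝ) else 0) + Polynomial.X))
        = (X + 1) ^ (s ∩ I).card * X ^ (k - (s ∩ I).card) := by
    intro s hs
    rw [Finset.mem_powersetCard] at hs
    have hcard := hs.2
    have h1 : Finset.filter (· ∈ I) s = s ∩ I := by
      ext x; simp [Finset.mem_inter, Finset.mem_filter, and_comm]
    have h2 : (Finset.filter (fun i => ¬ i ∈ I) s).card = k - (s ∩ I).card := by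
      have := Finset.card_filter_add_card_filter_not (s := s) (p := (· ∈ I))
      rw [h1] at this
      omega
    rw [← Finset.prod_filter_mul_prod_filter_not s (· ∈ I)]
    have e1 : ∏ i ∈ s.filter (· ∈ I),
        (Polynomial.C (if i ∈ I then (1 : ℝ) else 0) + X) = (X + 1) ^ (s ∩ I).card := by
      have h3 : ∀ i ∈ s.filter (· ∈ I),
          Polynomial.C (if i ∈ I then (1 : ℝ) else 0) + X = X + 1 := by
        intro i hi
        rw [Finset.mem_filter] at hi
        simp [hi.2, add_comm]
      rw [Finset.prod_congr rfl h3, Finset.prod_const, h1]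
    have e2 : ∏ i ∈ s.filter (fun i => ¬ i ∈ I),
        (Polynomial.C (if i ∈ I then (1 : ℝ) else 0) + X) = X ^ (k - (s ∩ I).card) := by
      have h3 : ∀ i ∈ s.filter (fun i => ¬ i ∈ I),
          Polynomial.C (if i ∈ I then (1 : ℝ) else 0) + X = X := by
        intro i hi
        rw [Finset.mem_filter] at hi
        simp [hi.2]
      rw [Finset.prod_congr rfl h3, Finset.prod_const, h2]
    rw [e1, e2]
  -- bound on intersection sizes
  have hb : ∀ s ∈ Finset.powersetCard k (Finset.univ : Finset (Fin n)),
      (s ∩ I).card ≤ min k c := by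
    intro s hs
    rw [Finset.mem_powersetCard] at hs
    refine le_min ?_ (Finset.card_le_card Finset.inter_subset_right)
    calc (s ∩ I).card ≤ s.card := Finset.card_le_card Finset.inter_subset_left
    _ = k := hs.2
  -- coefficients of summands
  have coeff_term : ∀ s ∈ Finset.powersetCard k (Finset.univ : Finset (Fin n)), ∀ j : ℕ,
      ((∏ i ∈ s, (Polynomial.C (if i ∈ I then (1 : ℝ) else 0) + Polynomial.X)).coeff j)
        = if k - (s ∩ I).card ≤ j then (((s ∩ I).card).choose (j - (k - (s ∩ I).card)) : ℝ)
          else 0 := by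
    intro s hs j
    rw [key s hs, coeff_mul_X_pow', coeff_X_add_one_pow]
  -- low coefficients vanish
  have low : ∀ j < m, P.coeff j = 0 := by
    intro j hj
    rw [hP, Polynomial.finset_sum_coeff]
    refine Finset.sum_eq_zero fun s hs => ?_
    rw [coeff_term s hs j, if_neg]
    have := hb s hs
    omega
  -- coefficient at m is positive
  obtain ⟨s₀, hs₀, hs₀I⟩ : ∃ s₀ ∈ Finset.powersetCard k (Finset.univ : Finset (Fin n)),
      (s₀ ∩ I).card = min k c := by
    rcases le_or_gt c k with h | h
    · obtain ⟨u, hu, hucard⟩ : ∃ u ⊆ (Finset.univ : Finset (Fin n)) \ I, u.card = k - c := by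
        apply Finset.exists_subset_card_eq
        rw [Finset.card_sdiff_of_subset (Finset.subset_univ I)]
        simp only [Finset.card_univ, Fintype.card_fin]
        omega
      refine ⟨I ∪ u, ?_, ?_⟩
      · rw [Finset.mem_powersetCard]
        refine ⟨Finset.subset_univ _, ?_⟩
        rw [Finset.card_union_of_disjoint, hucard]
        · omega
        · exact Finset.disjoint_left.mpr fun x hxI hxu => (Finset.mem_sdiff.mp (hu hxu)).2 hxI
      · rw [Finset.union_inter_distrib_right, Finset.inter_self]
        have : u ∩ I = ∅ := by
          apply Finset.eq_empty_of_forall_notMem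
          intro x hx
          rw [Finset.mem_inter] at hx
          have := hu hx.1
          rw [Finset.mem_sdiff] at this
          exact this.2 hx.2
        rw [this, Finset.union_empty]
        omega
    · obtain ⟨t, ht, htcard⟩ : ∃ t ⊆ I, t.card = k := Finset.exists_subset_card_eq (by omega)
      refine ⟨t, ?_, ?_⟩
      · rw [Finset.mem_powersetCard]
        exact ⟨Finset.subset_univ _, htcard⟩
      · rw [Finset.inter_eq_left.mpr ht]
        omega
  have coeff_m_pos : 0 < P.coeff m := by
    rw [hP, Polynomial.finset_sum_coeff]
    apply Finset.sum_pos'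
    · intro s hs
      rw [coeff_term s hs m]
      split
      · positivity
      · exact le_rfl
    · refine ⟨s₀, hs₀, ?_⟩
      rw [coeff_term s₀ hs₀ m, hs₀I, if_pos (by omega)]
      have : m - (k - min k c) = 0 := by omega
      rw [this]
      simp
  have hP0 : P ≠ 0 := fun h => by simp [h] at coeff_m_pos
  have htd : P.natTrailingDegree = m := by
    apply le_antisymm
    · exact natTrailingDegree_le_of_ne_zero (ne_of_gt coeff_m_pos)
    · exact le_natTrailingDegree hP0 low
  have hroot : Polynomial.rootMultiplicity 0 P = m := by
    rw [rootMultiplicity_eq_natTrailingDegree', htd]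
  exact ⟨hroot, by rw [hroot]; omega⟩
end

section
/- Let n and k be integers with 2 ≤ k ≤ n−2. Then there is no real k×n matrix L such that for every subset I ⊆ {1,…,n} with |I| = k the maximal minor det(L_I) equals 1 or −1. (The uniform matroid U_{k,n} has no unimodular realization unless k ≤ 1 or k ≥ n−1.) -/
open Matrix Finset

lemma det_one_upd {k : ℕ} (i : Fin k) (v : Fin k → ℝ) :
    ((1 : Matrix (Fin k) (Fin k) ℝ).updateCol i v).det = v i := by
  rw [← Matrix.cramer_apply, Matrix.cramer_one]
  rfl

lemma det_one_upd_two {k : ℕ} (i i' : Fin k) (h : i ≠ i') (v w : Fin k → ℝ) :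
    (((1 : Matrix (Fin k) (Fin k) ℝ).updateCol i v).updateCol i' w).det
      = v i * w i' - v i' * w i := by
  set C := (1 : Matrix (Fin k) (Fin k) ℝ).updateCol i v with hC
  have hterm : ∀ b : Fin k, (C.updateCol i' (Pi.single b 1)).det
      = if b = i' then v i else if b = i then -v i' else 0 := by
    intro b
    by_cases hb1 : b = i'
    · subst hb1
      have : C.updateCol b (Pi.single b 1) = C := by
        have : (Pi.single b 1 : Fin k → ℝ) = fun a => C a b := by
          funext a
          simp [hC, Matrix.updateCol_apply, (Ne.symm h : b ≠ i), Matrix.one_apply,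
            Pi.single_apply, eq_comm]
        rw [this, Matrix.updateCol_eq_self]
      rw [this, hC, det_one_upd]
      simp [h, Ne.symm h]
    · by_cases hb2 : b = i
      · subst hb2
        have hswap : C.updateCol i' (Pi.single b 1)
            = ((1 : Matrix (Fin k) (Fin k) ℝ).updateCol i' v).submatrix id
                (Equiv.swap b i') := by
          ext a j
          by_cases hj1 : j = b
          · subst hj1
            simp [hC, Matrix.updateCol_apply, h, Equiv.swap_apply_left]
          · by_cases hj2 : j = i'
            · subst hj2
              simp [hC, Matrix.updateCol_apply, h, Ne.symm h, Equiv.swap_apply_right,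
                Matrix.one_apply, Pi.single_apply, eq_comm]
            · simp [hC, Matrix.updateCol_apply, hj1, hj2,
                Equiv.swap_apply_of_ne_of_ne hj1 hj2]
        rw [hswap, Matrix.det_permute', Equiv.Perm.sign_swap h, det_one_upd]
        simp [h, Ne.symm h]
      · have : (C.updateCol i' (Pi.single b 1)).det = 0 := by
          apply Matrix.det_zero_of_column_eq (Ne.symm hb1)
          intro a
          simp [hC, Matrix.updateCol_apply, hb1, hb2, Matrix.one_apply, Pi.single_apply,
            eq_comm]
        rw [this]
        simp [hb1, hb2]
  have hw : w = ∑ b : Fin k, w b • (Pi.single b 1 : Fin k → ℝ) := by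
    funext a
    simp [Pi.single_apply]
  have ht1 : (C.updateCol i' w).det = Matrix.cramer C w i' := (Matrix.cramer_apply _ _ _).symm
  have ht2 : ∀ b : Fin k, (Matrix.cramer C (w b • (Pi.single b 1 : Fin k → ℝ))) i'
      = w b * (if b = i' then v i else if b = i then -v i' else 0) := by
    intro b
    rw [LinearMap.map_smul]
    simp [Matrix.cramer_apply, hterm b]
  have hsplit : ∀ b : Fin k, w b * (if b = i' then v i else if b = i then -v i' else 0)
      = (if b = i' then v i * w i' else 0) + (if b = i then -(v i' * w i) else 0) := by
    intro b
    by_cases hb1 : b = i'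
    · subst hb1
      simp [Ne.symm h]
      ring
    · by_cases hb2 : b = i
      · subst hb2
        simp [hb1]
        ring
      · simp [hb1, hb2]
  rw [ht1]
  conv_lhs => rw [hw]
  rw [map_sum, Finset.sum_apply, Finset.sum_congr rfl fun b _ => ht2 b,
    Finset.sum_congr rfl fun b _ => hsplit b, Finset.sum_add_distrib]
  simp [Finset.sum_ite_eq']
  ring

lemma det_submatrix_pm {n k : ℕ} (L : Matrix (Fin k) (Fin n) ℝ)
    (H : ∀ (I : Finset (Fin n)) (hI : I.card = k),
          (L.submatrix id (fun j => ((I.orderIsoOfFin hI j : Fin n)))).det = 1 ∨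
          (L.submatrix id (fun j => ((I.orderIsoOfFin hI j : Fin n)))).det = -1)
    (g : Fin k → Fin n) (hg : Function.Injective g) :
    (L.submatrix id g).det = 1 ∨ (L.submatrix id g).det = -1 := by
  classical
  set I : Finset (Fin n) := Finset.image g Finset.univ with hIdef
  have hI : I.card = k := by
    rw [hIdef, Finset.card_image_of_injective _ hg, Finset.card_univ, Fintype.card_fin]
  have hmem : ∀ j, g j ∈ I := fun j => Finset.mem_image_of_mem g (Finset.mem_univ j)
  set e := I.orderIsoOfFin hI with he
  have hσinj : Function.Injective (fun j => e.symm ⟨g j, hmem j⟩) := by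
    intro a b hab
    have h2 : (⟨g a, hmem a⟩ : {x // x ∈ I}) = ⟨g b, hmem b⟩ := by
      have := congrArg e hab
      simpa using this
    exact hg (congrArg Subtype.val h2)
  let σ : Equiv.Perm (Fin k) :=
    Equiv.ofBijective _ (Finite.injective_iff_bijective.mp hσinj)
  have hcomp : ∀ j, ((e (σ j) : Fin n)) = g j := by
    intro j
    show ((e (e.symm ⟨g j, hmem j⟩) : Fin n)) = g j
    simp
  have hsub : L.submatrix id g
      = (L.submatrix id (fun j => (e j : Fin n))).submatrix id σ := by
    ext a b
    simp [Matrix.submatrix_apply, hcomp]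
  have hH := H I hI
  rw [← he] at hH
  rw [hsub, Matrix.det_permute']
  rcases hH with h|h <;> rcases Int.units_eq_one_or (Equiv.Perm.sign σ) with hs|hs <;>
    rw [hs, h] <;> norm_num

set_option maxHeartbeats 1000000 in
/-- For `2 ≤ k ≤ n - 2` there is no real `k × n` matrix all of whose maximal
minors are `±1`; i.e. the uniform matroid `U_{k,n}` has no unimodular
realization unless `k ≤ 1` or `k ≥ n - 1`. -/
theorem stmt9 {n k : ℕ} (hk : 2 ≤ k) (hkn : k ≤ n - 2) :
    ¬ ∃ L : Matrix (Fin k) (Fin n) ℝ,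
        ∀ (I : Finset (Fin n)) (hI : I.card = k),
          (L.submatrix id (fun j => ((I.orderIsoOfFin hI j : Fin n)))).det = 1 ∨
          (L.submatrix id (fun j => ((I.orderIsoOfFin hI j : Fin n)))).det = -1 := by
  classical
  rintro ⟨L, H⟩
  have hn : k + 2 ≤ n := by omega
  have key : ∀ g : Fin k → Fin n, Function.Injective g →
      (L.submatrix id g).det = 1 ∨ (L.submatrix id g).det = -1 :=
    fun g hg => det_submatrix_pm L H g hg
  have hkn' : k ≤ n := by omega
  set g0 : Fin k → Fin n := fun j => ⟨j.1, by omega⟩ with hg0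
  have hg0inj : Function.Injective g0 := by
    intro a b hab
    have h' := congrArg Fin.val hab
    simp only [hg0] at h'
    exact Fin.ext h'
  set A := L.submatrix id g0 with hAdef
  have hdA := key g0 hg0inj
  have hAu : IsUnit A.det := by rcases hdA with h|h <;> simp [hAdef, h]
  set B := A⁻¹ with hBdef
  have hBA : B * A = 1 := Matrix.nonsing_inv_mul A hAu
  have hdBA : B.det * A.det = 1 := by rw [← Matrix.det_mul, hBA, Matrix.det_one]
  have hdB : B.det = 1 ∨ B.det = -1 := by
    rcases hdA with h|h
    · left; rw [h, mul_one] at hdBA; exact hdBA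
    · right; rw [h] at hdBA; linarith
  set M := B * L with hMdef
  have hsub : ∀ g : Fin k → Fin n, M.submatrix id g = B * (L.submatrix id g) := by
    intro g
    ext a b
    simp [hMdef, Matrix.mul_apply]
  have keyM : ∀ g : Fin k → Fin n, Function.Injective g →
      (M.submatrix id g).det = 1 ∨ (M.submatrix id g).det = -1 := by
    intro g hg
    rw [hsub g, Matrix.det_mul]
    rcases hdB with h|h <;> rcases key g hg with h2|h2 <;> rw [h, h2] <;> norm_num
  have hM1 : M.submatrix id g0 = 1 := by rw [hsub g0]; exact hBA
  have hMe : ∀ (a j : Fin k), M a (g0 j) = (1 : Matrix (Fin k) (Fin k) ℝ) a j := by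
    intro a j
    rw [← hM1]
    simp [Matrix.submatrix_apply]
  set i0 : Fin k := ⟨0, by omega⟩ with hi0
  set i1 : Fin k := ⟨1, by omega⟩ with hi1
  have hi01 : i0 ≠ i1 := by
    intro hcon
    have := congrArg Fin.val hcon
    simp [hi0, hi1] at this
  set c0 : Fin n := ⟨k, by omega⟩ with hc0
  set c1 : Fin n := ⟨k + 1, by omega⟩ with hc1
  obtain ⟨v, hv⟩ : ∃ v : Fin k → ℝ, v = fun a => M a c0 := ⟨_, rfl⟩
  obtain ⟨w, hwdef⟩ : ∃ w : Fin k → ℝ, w = fun a => M a c1 := ⟨_, rfl⟩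
  have hginj : ∀ (i : Fin k) (c : Fin n), (k : ℕ) ≤ c.1 →
      Function.Injective (fun j => if j = i then c else g0 j) := by
    intro i c hc a b hab
    simp only at hab
    by_cases ha : a = i <;> by_cases hb : b = i
    · rw [ha, hb]
    · rw [if_pos ha, if_neg hb] at hab
      exfalso
      have h' := congrArg Fin.val hab
      have hb2 := b.2
      simp only [hg0] at h'
      omega
    · rw [if_neg ha, if_pos hb] at hab
      exfalso
      have h' := congrArg Fin.val hab
      have ha2 := a.2
      simp only [hg0] at h'
      omega
    · rw [if_neg ha, if_neg hb] at hab
      exact hg0inj hab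
  have hgsub : ∀ (i : Fin k) (c : Fin n),
      M.submatrix id (fun j => if j = i then c else g0 j)
        = (1 : Matrix (Fin k) (Fin k) ℝ).updateCol i (fun a => M a c) := by
    intro i c
    ext a j
    by_cases hj : j = i
    · subst hj
      simp [Matrix.updateCol_apply]
    · simp [Matrix.updateCol_apply, hj, hMe]
  have hval : ∀ (i : Fin k) (c : Fin n), ((k:ℕ) ≤ c.1) →
      (fun a => M a c) i = 1 ∨ (fun a => M a c) i = -1 := by
    intro i c hc
    have := keyM _ (hginj i c hc)
    rwa [hgsub i c, det_one_upd] at this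
  have d1 : v i0 = 1 ∨ v i0 = -1 := by rw [hv]; exact hval i0 c0 (by simp [hc0])
  have d2 : v i1 = 1 ∨ v i1 = -1 := by rw [hv]; exact hval i1 c0 (by simp [hc0])
  have d3 : w i0 = 1 ∨ w i0 = -1 := by rw [hwdef]; exact hval i0 c1 (by simp [hc1])
  have d4 : w i1 = 1 ∨ w i1 = -1 := by rw [hwdef]; exact hval i1 c1 (by simp [hc1])
  obtain ⟨g2, hg2⟩ : ∃ g2 : Fin k → Fin n,
      g2 = fun j => if j = i1 then c1 else if j = i0 then c0 else g0 j := ⟨_, rfl⟩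
  have hg2inj : Function.Injective g2 := by
    intro a b hab
    have hv' := congrArg Fin.val hab
    have e1a : (a = i1) ↔ (a.1 = 1) := by simp [hi1, Fin.ext_iff]
    have e1b : (b = i1) ↔ (b.1 = 1) := by simp [hi1, Fin.ext_iff]
    have e0a : (a = i0) ↔ (a.1 = 0) := by simp [hi0, Fin.ext_iff]
    have e0b : (b = i0) ↔ (b.1 = 0) := by simp [hi0, Fin.ext_iff]
    simp only [hg2, apply_ite Fin.val, hc0, hc1, hg0, e1a, e1b, e0a, e0b] at hv'
    have h2a := a.2
    have h2b := b.2
    apply Fin.ext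
    split_ifs at hv' <;> omega
  have hg2sub : M.submatrix id g2
      = ((1 : Matrix (Fin k) (Fin k) ℝ).updateCol i0 v).updateCol i1 w := by
    ext a j
    by_cases hj1 : j = i1
    · subst hj1
      simp [hg2, Matrix.updateCol_apply, hv, hwdef]
    · by_cases hj0 : j = i0
      · subst hj0
        simp [hg2, Matrix.updateCol_apply, hj1, hi01, Ne.symm hi01, hv, hwdef]
      · simp [hg2, Matrix.updateCol_apply, hj1, hj0, hMe]
  have d5 : v i0 * w i1 - v i1 * w i0 = 1 ∨ v i0 * w i1 - v i1 * w i0 = -1 := by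
    have := keyM g2 hg2inj
    rwa [hg2sub, det_one_upd_two i0 i1 hi01] at this
  rcases d1 with h1|h1 <;> rcases d2 with h2|h2 <;> rcases d3 with h3|h3 <;>
    rcases d4 with h4|h4 <;> rw [h1, h2, h3, h4] at d5 <;>
    rcases d5 with d|d <;> norm_num at d
end

section
/- Let n ≥ 2 and for x ∈ ℝⁿ define the symmetric (n+1)×(n+1) arrow matrix A(x) with A(x)₀₀ = E₁(x), A(x)₀ᵢ = A(x)ᵢ₀ = xᵢ for 1 ≤ i ≤ n, A(x)ᵢᵢ = E₁(x) for 1 ≤ i ≤ n, and all other entries 0, where E₁(x) = x₁ + ⋯ + xₙ. Then det A(x) = 2 · E₁(x)^{n−1} · E₂(x) as a polynomial identity, and A(𝟙) is positive definite. (Thus E₁^{n−1}E₂ has a symmetric determinantal representation that is positive definite at 𝟙.) -/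
/-- The second elementary symmetric function of `x : Fin n → ℝ`. -/
noncomputable def esymm2 {n : ℕ} (x : Fin n → ℝ) : ℝ :=
  ∑ s ∈ Finset.powersetCard 2 (Finset.univ : Finset (Fin n)), ∏ i ∈ s, x i

/-- The symmetric `(n+1) × (n+1)` arrow matrix with `A(x)₀₀ = E₁(x)`,
`A(x)₀ᵢ = A(x)ᵢ₀ = xᵢ`, `A(x)ᵢᵢ = E₁(x)` for `1 ≤ i ≤ n` and zeros elsewhere. -/
noncomputable def arrow (n : ℕ) (x : Fin n → ℝ) : Matrix (Fin (n + 1)) (Fin (n + 1)) ℝ :=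
  Matrix.of fun i j =>
    if hi : i = 0 then (if hj : j = 0 then ∑ t, x t else x (j.pred hj))
    else if hj : j = 0 then x (i.pred hi)
    else if i = j then ∑ t, x t else 0



lemma sq_sum_eq {α : Type*} [DecidableEq α] (s : Finset α) (x : α → ℝ) :
    (∑ i ∈ s, x i) ^ 2 =
      ∑ i ∈ s, x i ^ 2 + 2 * ∑ p ∈ s.powersetCard 2, ∏ i ∈ p, x i := by
  induction s using Finset.induction_on with
  | empty =>
    rw [show Finset.powersetCard 2 (∅ : Finset α) = ∅ from
      Finset.powersetCard_eq_empty.mpr (by simp)]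
    simp
  | insert a s ha ih =>
    rw [Finset.sum_insert ha, Finset.sum_insert ha,
      Finset.powersetCard_succ_insert ha, Finset.sum_union, Finset.sum_image]
    · have h1 : ∑ p ∈ Finset.powersetCard 1 s, ∏ i ∈ insert a p, x i
          = x a * ∑ i ∈ s, x i := by
        rw [Finset.powersetCard_one, Finset.sum_map, Finset.mul_sum]
        refine Finset.sum_congr rfl fun i hi => ?_
        have hai : a ∉ ({i} : Finset α) := by
          simp only [Finset.mem_singleton]
          rintro rfl; exact ha hi
        simp [Finset.prod_insert hai]
      rw [h1]; ring_nf; rw [ih]; ring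
    · intro p hp q hq hpq
      have hap : a ∉ p := fun h => ha ((Finset.mem_powersetCard.mp hp).1 h)
      have haq : a ∉ q := fun h => ha ((Finset.mem_powersetCard.mp hq).1 h)
      have := congrArg (Finset.erase · a) hpq
      simpa [Finset.erase_insert_eq_erase, Finset.erase_eq_of_notMem hap,
        Finset.erase_eq_of_notMem haq] using this
    · rw [Finset.disjoint_right]
      rintro p hp hp2
      obtain ⟨q, hq, rfl⟩ := Finset.mem_image.mp hp
      exact ha ((Finset.mem_powersetCard.mp hp2).1 (Finset.mem_insert_self a q))


lemma det_arrow_aux {n : ℕ} (hn : 1 ≤ n) (x : Fin n → ℝ) (h : (∑ t, x t) ≠ 0) :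
    (arrow n x).det = (∑ t, x t) ^ (n - 1) * ((∑ t, x t) ^ 2 - ∑ t, x t ^ 2) := by
  set s : ℝ := ∑ t, x t with hs
  let e : Fin 1 ⊕ Fin n ≃ Fin (n + 1) := finSumFinEquiv.trans (finCongr (Nat.add_comm 1 n))
  have he0 : ∀ i : Fin 1, (e (Sum.inl i) : Fin (n+1)) = 0 := by
    intro i
    ext
    simp [e, finSumFinEquiv, Fin.ext_iff]
  have he1 : ∀ j : Fin n, (e (Sum.inr j) : Fin (n+1)) = Fin.succ j := by
    intro j
    ext
    simp only [e, Equiv.trans_apply, finCongr_apply, Fin.coe_cast, finSumFinEquiv,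
      Equiv.coe_fn_mk, Fin.val_succ]
    simp [Fin.natAdd, Nat.add_comm]
  have harr : Matrix.fromBlocks (Matrix.of fun (_ : Fin 1) (_ : Fin 1) => s)
      (Matrix.of fun (_ : Fin 1) (j : Fin n) => x j)
      (Matrix.of fun (i : Fin n) (_ : Fin 1) => x i)
      (Matrix.diagonal fun _ : Fin n => s) = (arrow n x).submatrix e e := by
    ext i j
    cases i with
    | inl i =>
      cases j with
      | inl j => simp [Matrix.submatrix, he0, arrow, hs]
      | inr j => simp [Matrix.submatrix, he0, he1, arrow, Fin.succ_ne_zero]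
    | inr i =>
      cases j with
      | inl j => simp [Matrix.submatrix, he0, he1, arrow, Fin.succ_ne_zero]
      | inr j =>
        simp only [Matrix.submatrix_apply, he1, arrow, Matrix.fromBlocks,
          Matrix.of_apply, Sum.elim_inr, Matrix.diagonal_apply]
        by_cases hij : i = j
        · simp [hij, Fin.succ_ne_zero, hs]
        · have : ¬ (Fin.succ i = Fin.succ j) := fun h' => hij (Fin.succ_injective _ h')
          simp [hij, Fin.succ_ne_zero, this]
  have hdet : (arrow n x).det = (Matrix.fromBlocks (Matrix.of fun (_ : Fin 1) (_ : Fin 1) => s)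
      (Matrix.of fun (_ : Fin 1) (j : Fin n) => x j)
      (Matrix.of fun (i : Fin n) (_ : Fin 1) => x i)
      (Matrix.diagonal fun _ : Fin n => s)).det := by
    rw [harr, Matrix.det_submatrix_equiv_self]
  haveI hvinst : Invertible (fun _ : Fin n => s) :=
    ⟨fun _ => s⁻¹, by ext i; simp [inv_mul_cancel₀ h], by ext i; simp [mul_inv_cancel₀ h]⟩
  haveI : Invertible (Matrix.diagonal fun _ : Fin n => s) := Matrix.diagonalInvertible _
  have hinv : (⅟(fun _ : Fin n => s)) = fun _ : Fin n => s⁻¹ :=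
    invOf_eq_right_inv (by ext i; simp [mul_inv_cancel₀ h])
  rw [hdet, Matrix.det_fromBlocks₂₂]
  rw [Matrix.invOf_diagonal_eq, hinv]
  rw [Matrix.det_diagonal, Finset.prod_const, Finset.card_univ, Fintype.card_fin]
  rw [Matrix.det_fin_one]
  have hmul : ((Matrix.of fun (_ : Fin 1) (j : Fin n) => x j) *
      Matrix.diagonal (fun _ : Fin n => s⁻¹) *
      (Matrix.of fun (i : Fin n) (_ : Fin 1) => x i)) 0 0 = s⁻¹ * ∑ t, x t ^ 2 := by
    rw [Matrix.mul_apply, Finset.mul_sum]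
    refine Finset.sum_congr rfl fun k _ => ?_
    rw [Matrix.mul_diagonal]
    simp only [Matrix.of_apply]
    ring
  simp only [Matrix.sub_apply, hmul, Matrix.of_apply]
  have hpow : s ^ n = s ^ (n - 1) * s := by
    conv_lhs => rw [show n = (n - 1) + 1 by omega]
    rw [pow_succ]
  rw [hpow]
  field_simp

/-- The arrow matrix gives a symmetric determinantal representation
`det A(x) = 2 ⬝ E₁(x)^{n-1} ⬝ E₂(x)` which is positive definite at `𝟙`. -/
theorem stmt13 {n : ℕ} (hn : 2 ≤ n) :
    (∀ x : Fin n → ℝ,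
      (arrow n x).det = 2 * (∑ i, x i) ^ (n - 1) * esymm2 x) ∧
    (arrow n (fun _ => 1)).PosDef := by
  constructor
  · -- the determinant identity, by continuity from the generic case `∑ x i ≠ 0`
    have hf : Continuous fun x : Fin n → ℝ => (arrow n x).det := by
      apply Continuous.matrix_det
      apply continuous_matrix
      intro i j
      simp only [arrow, Matrix.of_apply]
      split_ifs <;>
        first
          | exact continuous_finset_sum _ fun t _ => continuous_apply t
          | exact continuous_apply _
          | exact continuous_const
    have hg : Continuous fun x : Fin n → ℝ =>
        2 * (∑ i, x i) ^ (n - 1) * esymm2 x := by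
      unfold esymm2
      exact (continuous_const.mul
        ((continuous_finset_sum _ fun i _ => continuous_apply i).pow _)).mul
        (continuous_finset_sum _ fun p _ =>
          continuous_finset_prod _ fun i _ => continuous_apply i)
    have hdense : Dense {x : Fin n → ℝ | ∑ i, x i ≠ 0} := by
      intro x
      by_cases hx : ∑ i, x i ≠ 0
      · exact subset_closure hx
      · push_neg at hx
        have hc : Filter.Tendsto (fun k : ℕ => ((k : ℝ) + 1)⁻¹)
            Filter.atTop (nhds 0) := by
          simpa [one_div] using tendsto_one_div_add_atTop_nhds_zero_nat (𝕜 := ℝ)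
        have hy : Filter.Tendsto
            (fun k : ℕ => x + ((k : ℝ) + 1)⁻¹ • (fun _ => (1:ℝ) : Fin n → ℝ))
            Filter.atTop (nhds x) := by
          have h0 : Filter.Tendsto
              (fun k : ℕ => ((k : ℝ) + 1)⁻¹ • (fun _ => (1:ℝ) : Fin n → ℝ))
              Filter.atTop (nhds (0 : Fin n → ℝ)) := by
            simpa using hc.smul_const (fun _ => (1:ℝ) : Fin n → ℝ)
          have h1 := (tendsto_const_nhds :
            Filter.Tendsto (fun _ : ℕ => x) Filter.atTop (nhds x)).add h0
          simpa using h1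
        refine mem_closure_of_tendsto hy (Filter.Eventually.of_forall fun k => ?_)
        have hk : (0:ℝ) < ((k : ℝ) + 1)⁻¹ := by positivity
        have hn0 : (0:ℝ) < n := by
          have : 0 < n := by omega
          exact_mod_cast this
        simp only [Set.mem_setOf_eq, Pi.add_apply, Pi.smul_apply, smul_eq_mul, mul_one,
          Finset.sum_add_distrib, hx, Finset.sum_const, Finset.card_univ,
          Fintype.card_fin, nsmul_eq_mul, zero_add]
        positivity
    have heq : (fun x : Fin n → ℝ => (arrow n x).det)
        = fun x : Fin n → ℝ => 2 * (∑ i, x i) ^ (n - 1) * esymm2 x := by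
      refine Continuous.ext_on hdense hf hg fun x hx => ?_
      have hx' : (∑ t, x t) ≠ 0 := hx
      rw [det_arrow_aux (by omega) x hx']
      have h2 : (∑ t, x t) ^ 2 - ∑ t, x t ^ 2 = 2 * esymm2 x := by
        have := sq_sum_eq (Finset.univ : Finset (Fin n)) x
        unfold esymm2
        linarith
      rw [h2]; ring
    exact fun x => congrFun heq x
  · -- positive definiteness at the all-ones vector
    rw [Matrix.posDef_iff_dotProduct_mulVec]
    constructor
    · -- Hermitian
      ext i j
      simp only [Matrix.conjTranspose_apply, star_trivial, arrow, Matrix.of_apply]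
      by_cases hi : i = 0 <;> by_cases hj : j = 0 <;> simp [hi, hj, eq_comm]
    · intro y hy
      set c : ℝ := y 0 with hc
      set z : Fin n → ℝ := fun j => y j.succ with hz
      set S : ℝ := ∑ j, z j with hS
      set T : ℝ := ∑ j, z j ^ 2 with hT
      have hA00 : arrow n (fun _ => 1) 0 0 = (n : ℝ) := by
        simp [arrow]
      have hA0s : ∀ j : Fin n, arrow n (fun _ => 1) 0 j.succ = 1 := by
        intro j; simp [arrow, Fin.succ_ne_zero]
      have hAs0 : ∀ i : Fin n, arrow n (fun _ => 1) i.succ 0 = 1 := by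
        intro i; simp [arrow, Fin.succ_ne_zero]
      have hAss : ∀ i j : Fin n, arrow n (fun _ => 1) i.succ j.succ
          = if i = j then (n : ℝ) else 0 := by
        intro i j
        by_cases hij : i = j
        · simp [arrow, hij, Fin.succ_ne_zero]
        · have : ¬ (Fin.succ i = Fin.succ j) := fun h' => hij (Fin.succ_injective _ h')
          simp [arrow, hij, Fin.succ_ne_zero, this]
      have hmv0 : (Matrix.mulVec (arrow n fun _ => 1) y) 0 = n * c + S := by
        simp only [Matrix.mulVec, dotProduct, Fin.sum_univ_succ, hA00]
        rw [Finset.sum_congr rfl fun j _ => by rw [hA0s j, one_mul]]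
      have hmvs : ∀ i : Fin n, (Matrix.mulVec (arrow n fun _ => 1) y) i.succ = c + n * z i := by
        intro i
        simp only [Matrix.mulVec, dotProduct, Fin.sum_univ_succ, hAs0, one_mul]
        have hterm : ∀ j : Fin n, arrow n (fun _ => (1:ℝ)) i.succ j.succ * y j.succ
            = if i = j then (n:ℝ) * y j.succ else 0 := by
          intro j; rw [hAss]; split_ifs <;> simp
        rw [Finset.sum_congr rfl fun j _ => hterm j, Finset.sum_ite_eq]
        simp [hz, hc]
      have hQ : dotProduct (star y) (Matrix.mulVec (arrow n fun _ => 1) y)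
          = n * c ^ 2 + 2 * c * S + n * T := by
        simp only [star_trivial]
        simp only [dotProduct]
        rw [Fin.sum_univ_succ, hmv0]
        rw [Finset.sum_congr rfl fun i _ => by rw [hmvs i]]
        have : ∑ i : Fin n, y i.succ * (c + n * z i) = S * c + n * T := by
          rw [hS, hT, Finset.sum_mul, Finset.mul_sum, ← Finset.sum_add_distrib]
          refine Finset.sum_congr rfl fun i _ => ?_
          simp only [hz]; ring
        rw [this]; ring
      rw [hQ]
      have hcauchy : S ^ 2 ≤ n * T := by
        have := sq_sum_le_card_mul_sum_sq (s := (Finset.univ : Finset (Fin n))) (f := z)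
        simpa [hS, hT] using this
      have hn2 : (2:ℝ) ≤ n := by exact_mod_cast hn
      by_cases hc0 : c = 0
      · obtain ⟨i, hi⟩ := Function.ne_iff.mp hy
        have hzpos : 0 < T := by
          refine Finset.sum_pos' (fun j _ => sq_nonneg _) ?_
          rcases Fin.eq_zero_or_eq_succ i with rfl | ⟨k, rfl⟩
          · exact (hi (by rw [← hc]; exact hc0)).elim
          · refine ⟨k, Finset.mem_univ k, ?_⟩
            have hzk : z k ≠ 0 := hi
            exact lt_of_le_of_ne (sq_nonneg _) (Ne.symm (pow_ne_zero 2 hzk))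
        rw [hc0]
        have hn0 : (0:ℝ) < n := by linarith
        nlinarith
      · have hcpos : 0 < c ^ 2 := by positivity
        nlinarith [sq_nonneg (c + S)]
end

section
/- Let n ≥ 2 and for x ∈ ℝⁿ let A(x) be the symmetric (n+1)×(n+1) arrow matrix with A(x)₀₀ = E₁(x), A(x)₀ᵢ = A(x)ᵢ₀ = xᵢ for 1 ≤ i ≤ n, A(x)ᵢᵢ = E₁(x) for 1 ≤ i ≤ n, and zeros elsewhere. Then for every x ∈ ℝⁿ the following are equivalent: (i) A(x) is positive semidefinite; (ii) E₁(x) ≥ 0 and E₂(x) ≥ 0; (iii) every real root t of the univariate polynomial t ↦ E₂(x + t𝟙) satisfies t ≤ 0. (Thus the hyperbolicity cone of E₂ with respect to 𝟙 is a spectrahedral cone.) -/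
open Finset Matrix

lemma two_mul_sum_pc2 {ι : Type*} [DecidableEq ι] (s : Finset ι) (x : ι → ℝ) :
    2 * ∑ t ∈ s.powersetCard 2, ∏ i ∈ t, x i
      = (∑ i ∈ s, x i)^2 - ∑ i ∈ s, (x i)^2 := by
  induction s using Finset.induction_on with
  | empty => rw [Finset.powersetCard_eq_empty.2 (by simp)]; simp
  | @insert a s ha ih =>
    have h2 : (2 : ℕ) = Nat.succ 1 := rfl
    rw [h2, powersetCard_succ_insert ha]
    have hdisj : Disjoint (powersetCard (Nat.succ 1) s) ((powersetCard 1 s).image (insert a)) := by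
      rw [Finset.disjoint_right]
      intro t ht ht'
      simp only [mem_image] at ht
      obtain ⟨u, hu, rfl⟩ := ht
      rw [mem_powersetCard] at ht'
      exact ha (ht'.1 (mem_insert_self a u))
    rw [Finset.sum_union hdisj]
    have hinj : ∀ u ∈ powersetCard 1 s, ∀ v ∈ powersetCard 1 s,
        insert a u = insert a v → u = v := by
      intro u hu v hv h
      rw [mem_powersetCard] at hu hv
      have hau : a ∉ u := fun h' => ha (hu.1 h')
      have hav : a ∉ v := fun h' => ha (hv.1 h')
      rw [← Finset.erase_insert hau, ← Finset.erase_insert hav, h]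
    rw [Finset.sum_image hinj]
    have himg : ∑ u ∈ powersetCard 1 s, ∏ i ∈ insert a u, x i
        = x a * ∑ i ∈ s, x i := by
      rw [Finset.mul_sum, powersetCard_one, Finset.sum_map]
      refine Finset.sum_congr rfl fun i hi => ?_
      simp only [Function.Embedding.coeFn_mk]
      rw [Finset.prod_insert (by simp; exact fun h => ha (h ▸ hi)), Finset.prod_singleton]
    rw [himg, Finset.sum_insert ha, Finset.sum_insert ha]
    rw [mul_add, ih]
    ring

lemma esymm2_eq {n : ℕ} (x : Fin n → ℝ) :
    esymm2 x = ((∑ i, x i)^2 - ∑ i, (x i)^2)/2 := by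
  have h := two_mul_sum_pc2 (Finset.univ : Finset (Fin n)) x
  unfold esymm2; linarith

lemma esymm2_shift {n : ℕ} (x : Fin n → ℝ) (t : ℝ) :
    esymm2 (fun i => x i + t)
      = esymm2 x + ((n : ℝ) - 1) * (∑ i, x i) * t + ((n : ℝ) * ((n : ℝ) - 1) / 2) * t^2 := by
  rw [esymm2_eq, esymm2_eq]
  have h1 : ∑ i : Fin n, (x i + t) = (∑ i, x i) + n * t := by
    rw [Finset.sum_add_distrib, Finset.sum_const, card_univ, Fintype.card_fin, nsmul_eq_mul]
  have h2 : ∑ i : Fin n, (x i + t)^2 = (∑ i, (x i)^2) + 2 * t * (∑ i, x i) + n * t^2 := by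
    have e : ∀ i : Fin n, (x i + t)^2 = (x i)^2 + 2 * t * x i + t^2 := fun i => by ring
    simp_rw [e, Finset.sum_add_distrib, Finset.sum_const, card_univ, Fintype.card_fin,
      nsmul_eq_mul, Finset.mul_sum]
  rw [h1, h2]; ring

lemma arrow_quad {n : ℕ} (x : Fin n → ℝ) (y : Fin (n + 1) → ℝ) :
    y ⬝ᵥ (arrow n x) *ᵥ y
      = (∑ i, x i) * (y 0)^2 + 2 * y 0 * (∑ i : Fin n, x i * y i.succ)
        + (∑ i, x i) * ∑ i : Fin n, (y i.succ)^2 := by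
  simp only [dotProduct, Matrix.mulVec, arrow, Matrix.of_apply,
    Fin.sum_univ_succ, Fin.succ_ne_zero, dif_pos, dif_neg, Fin.pred_succ,
    not_false_iff, dite_eq_ite, if_true, if_false, reduceDIte]
  simp only [Fin.succ_inj, ite_mul, zero_mul, Finset.sum_ite_eq, mem_univ, if_true]
  have key : ∑ i : Fin n, y i.succ * (x i * y 0 + (∑ t, x t) * y i.succ)
      = y 0 * (∑ i : Fin n, x i * y i.succ) + (∑ t, x t) * ∑ i : Fin n, (y i.succ)^2 := by
    rw [Finset.mul_sum, Finset.mul_sum, ← Finset.sum_add_distrib]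
    exact Finset.sum_congr rfl fun i _ => by ring
  rw [key]; ring

lemma arrow_herm {n : ℕ} (x : Fin n → ℝ) : (arrow n x).IsHermitian := by
  rw [Matrix.IsHermitian]
  ext i j
  simp only [Matrix.conjTranspose_apply, arrow, Matrix.of_apply, star_trivial]
  rcases eq_or_ne i 0 with hi | hi <;> rcases eq_or_ne j 0 with hj | hj <;>
    simp [hi, hj, eq_comm]

lemma quad_root_bound (a b c : ℝ) (ha : 0 < a) (hD : 0 ≤ b^2 - 4*a*c)
    (h : ∀ t : ℝ, c + b*t + a*t^2 = 0 → t ≤ 0) : 0 ≤ b ∧ 0 ≤ c := by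
  set s := Real.sqrt (b^2 - 4*a*c) with hsdef
  have hs2 : s^2 = b^2 - 4*a*c := Real.sq_sqrt hD
  have hsnn : 0 ≤ s := Real.sqrt_nonneg _
  have hroot : c + b * ((-b + s)/(2*a)) + a * ((-b + s)/(2*a))^2 = 0 := by
    field_simp
    nlinarith [hs2]
  have hr := h _ hroot
  have hsb : s ≤ b := by
    rcases div_nonpos_iff.1 hr with ⟨h1', h2'⟩ | ⟨h1', h2'⟩
    · linarith
    · nlinarith
  have hb : 0 ≤ b := le_trans hsnn hsb
  refine ⟨hb, ?_⟩
  nlinarith [hs2, sq_nonneg s]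

lemma quad_nonpos_root (a b c : ℝ) (ha : 0 < a) (hb : 0 ≤ b) (hc : 0 ≤ c)
    (t : ℝ) (ht : c + b*t + a*t^2 = 0) : t ≤ 0 := by
  by_contra hcon
  push_neg at hcon
  nlinarith [mul_nonneg hb hcon.le, mul_pos (mul_pos ha hcon) hcon]

/-- The hyperbolicity cone of `E₂` with respect to `𝟙` is spectrahedral: the
following are equivalent: (i) the arrow matrix `A(x)` is positive semidefinite;
(ii) `E₁(x) ≥ 0` and `E₂(x) ≥ 0`; (iii) every real root `t` of
`t ↦ E₂(x + t𝟙)` satisfies `t ≤ 0`. -/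
theorem stmt14 {n : ℕ} (hn : 2 ≤ n) (x : Fin n → ℝ) :
    ((arrow n x).PosSemidef ↔ (0 ≤ ∑ i, x i ∧ 0 ≤ esymm2 x)) ∧
    ((0 ≤ ∑ i, x i ∧ 0 ≤ esymm2 x) ↔
      ∀ t : ℝ, esymm2 (fun i => x i + t) = 0 → t ≤ 0) := by
  have hE2eq : esymm2 x = ((∑ i, x i)^2 - ∑ i, (x i)^2)/2 := esymm2_eq x
  have hSnn : 0 ≤ ∑ i, (x i)^2 := Finset.sum_nonneg fun i _ => sq_nonneg _
  have hn' : (2 : ℝ) ≤ (n : ℝ) := by exact_mod_cast hn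
  constructor
  · constructor
    · rintro hpsd
      obtain ⟨hherm, hq⟩ := Matrix.posSemidef_iff_dotProduct_mulVec.mp hpsd
      have h0 : 0 ≤ ∑ i, x i := by
        have := hq (Pi.single 0 1)
        rw [star_trivial, arrow_quad] at this
        simpa [Pi.single_eq_of_ne (Fin.succ_ne_zero _)] using this
      refine ⟨h0, ?_⟩
      have eS : ∀ d : ℝ, ∑ i : Fin n, x i * (d * x i) = d * ∑ i, (x i)^2 := by
        intro d; rw [Finset.mul_sum]; exact Finset.sum_congr rfl fun i _ => by ring
      have eT : ∀ d : ℝ, ∑ i : Fin n, (d * x i)^2 = d^2 * ∑ i, (x i)^2 := by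
        intro d; rw [Finset.mul_sum]; exact Finset.sum_congr rfl fun i _ => by ring
      rcases h0.eq_or_lt with hz | hp
      · -- E1 = 0 : S must be 0
        have hp' : ∀ c : ℝ, 0 ≤ 2 * c * (1 * ∑ i, (x i)^2) := by
          intro c
          have := hq (Fin.cons c (fun i => 1 * x i))
          rw [star_trivial, arrow_quad] at this
          simp only [Fin.cons_zero, Fin.cons_succ, eS 1, eT 1, ← hz] at this
          linarith
        have h1 := hp' 1
        have h2 := hp' (-1)
        have hS0 : (∑ i, (x i)^2) = 0 := by nlinarith
        rw [hE2eq, hS0, ← hz]; norm_num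
      · have := hq (Fin.cons (-(∑ i, (x i)^2)) (fun i => (∑ i, x i) * x i))
        rw [star_trivial, arrow_quad] at this
        simp only [Fin.cons_zero, Fin.cons_succ, eS _, eT _] at this
        rw [hE2eq]
        rcases hSnn.eq_or_lt with hS0 | hSp
        · rw [← hS0]; nlinarith [sq_nonneg (∑ i, x i)]
        · nlinarith [mul_pos hp hSp]
    · rintro ⟨h1, h2⟩
      refine Matrix.posSemidef_iff_dotProduct_mulVec.mpr ⟨arrow_herm x, fun y => ?_⟩
      rw [star_trivial, arrow_quad]
      have hT : 0 ≤ ∑ i : Fin n, (y i.succ)^2 := Finset.sum_nonneg fun i _ => sq_nonneg _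
      have hCS : (∑ i : Fin n, x i * y i.succ)^2
          ≤ (∑ i, (x i)^2) * ∑ i : Fin n, (y i.succ)^2 :=
        Finset.sum_mul_sq_le_sq_mul_sq univ x (fun i => y i.succ)
      rw [hE2eq] at h2
      rcases h1.eq_or_lt with hz | hp
      · have hS0 : (∑ i, (x i)^2) ≤ 0 := by nlinarith
        have hP : (∑ i : Fin n, x i * y i.succ) = 0 := by
          nlinarith [sq_nonneg (∑ i : Fin n, x i * y i.succ),
            mul_nonpos_of_nonpos_of_nonneg hS0 hT]
        rw [← hz, hP]; ring_nf; exact le_refl 0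
      · nlinarith [sq_nonneg ((∑ i, x i) * y 0 + ∑ i : Fin n, x i * y i.succ),
          mul_nonneg (mul_nonneg h1 hT) (sub_nonneg.2 (by nlinarith : (∑ i, (x i)^2) ≤ (∑ i, x i)^2))]
  · have hCSn : (∑ i, x i)^2 ≤ (∑ i, (x i)^2) * n := by
      have := Finset.sum_mul_sq_le_sq_mul_sq univ x (fun _ => (1:ℝ))
      simpa [card_univ] using this
    have ha : 0 < (n : ℝ) * ((n : ℝ) - 1) / 2 := by nlinarith
    have hshift : ∀ t : ℝ, esymm2 (fun i => x i + t)
        = esymm2 x + (((n:ℝ) - 1) * (∑ i, x i)) * t + ((n : ℝ) * ((n : ℝ) - 1) / 2) * t^2 := by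
      intro t; rw [esymm2_shift]
    constructor
    · rintro ⟨h1, h2⟩ t ht
      rw [hshift] at ht
      have hb : 0 ≤ ((n:ℝ) - 1) * (∑ i, x i) := by nlinarith
      exact quad_nonpos_root ((n : ℝ) * ((n : ℝ) - 1) / 2) (((n:ℝ) - 1) * (∑ i, x i))
        (esymm2 x) ha hb h2 t ht
    · intro h
      have hD : 0 ≤ (((n:ℝ) - 1) * (∑ i, x i))^2
          - 4 * ((n : ℝ) * ((n : ℝ) - 1) / 2) * esymm2 x := by
        rw [hE2eq]
        nlinarith [mul_nonneg (by linarith : (0:ℝ) ≤ (n:ℝ) - 1) (sub_nonneg.2 hCSn)]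
      have := quad_root_bound _ _ _ ha hD (fun t ht => h t (by rw [hshift]; linarith))
      exact ⟨by nlinarith [this.1], this.2⟩
end

section
/- Let 1 ≤ k ≤ n and let E_k denote the k-th elementary symmetric polynomial in n variables. Then E_k is hyperbolic with respect to 𝟙 = (1,…,1): E_k(𝟙) > 0 and for every x ∈ ℝⁿ the univariate polynomial t ↦ E_k(x₁ + t, …, xₙ + t) of degree k has only real roots. -/
open Polynomial

private lemma msum_pos {s : Multiset ℝ} (h : ∀ x ∈ s, (0:ℝ) < x) (hs : s ≠ 0) : 0 < s.sum := by
  induction s using Multiset.induction_on with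
  | empty => exact absurd rfl hs
  | cons a t ih =>
    rw [Multiset.sum_cons]
    rcases eq_or_ne t 0 with rfl | ht
    · simpa using h a (by simp)
    · exact add_pos (h a (by simp)) (ih (fun x hx => h x (by simp [hx])) ht)

private lemma deriv_real_roots {q : ℝ[X]} (hq : q.natDegree ≠ 0)
    (h : ∀ z : ℂ, aeval z q = 0 → z.im = 0)
    {z : ℂ} (hz : aeval z (derivative q) = 0) : z.im = 0 := by
  by_contra him
  set Q : ℂ[X] := q.map (algebraMap ℝ ℂ) with hQdef
  have hq0 : q ≠ 0 := fun h0 => hq (by simp [h0])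
  have hQ0 : Q ≠ 0 := by simpa [hQdef, Polynomial.map_eq_zero] using hq0
  have hroots : ∀ r ∈ Q.roots, r.im = 0 := by
    intro r hr
    have := (Polynomial.mem_roots hQ0).mp hr
    exact h r (by rwa [aeval_def, ← eval_map])
  have hsub : ∀ r ∈ Q.roots, z - r ≠ 0 := by
    intro r hr h0
    apply him
    have : z = r := by linear_combination h0
    rw [this]; exact hroots r hr
  have hdeg : Q.natDegree = q.natDegree := by simp [hQdef]
  have hcard : Multiset.card Q.roots = q.natDegree := by
    rw [← hdeg, ← (Polynomial.splits_iff_card_roots).mp (IsAlgClosed.splits Q)]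
  have hroots0 : Q.roots ≠ 0 := by
    intro h0; rw [h0] at hcard; exact hq hcard.symm
  have hfac : Q = C Q.leadingCoeff * (Q.roots.map fun a => X - C a).prod :=
    (IsAlgClosed.splits Q).eq_prod_roots
  have hdz : eval z (derivative Q) = 0 := by
    rw [hQdef, derivative_map, eval_map, ← aeval_def, hz]
  set P : ℂ := (Q.roots.map fun t => z - t).prod with hP
  have hPne : P ≠ 0 := by
    rw [hP]
    apply Multiset.prod_ne_zero
    intro h0
    obtain ⟨r, hr, hr0⟩ := Multiset.mem_map.mp h0
    exact hsub r hr hr0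
  have key : eval z (derivative Q)
      = Q.leadingCoeff * (Q.roots.map fun r => (z - r)⁻¹ * P).sum := by
    conv_lhs => rw [hfac]
    rw [derivative_C_mul, eval_C_mul]
    congr 1
    rw [derivative_prod, ← coe_evalRingHom, map_multiset_sum, Multiset.map_map]
    apply congrArg
    apply Multiset.map_congr rfl
    intro r hr
    simp only [Function.comp_apply, derivative_sub, derivative_X, derivative_C, sub_zero,
      mul_one, coe_evalRingHom, eval_mul, eval_one]
    rw [← coe_evalRingHom, map_multiset_prod, Multiset.map_map]
    rw [eq_inv_mul_iff_mul_eq₀ (hsub r hr), hP]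
    rw [← Multiset.prod_map_erase (f := fun t => z - t) hr]
    congr 1
    apply congrArg
    apply Multiset.map_congr rfl
    intro t _
    simp
  set S : ℂ := (Q.roots.map fun r => (z - r)⁻¹).sum with hS
  have hS0 : S = 0 := by
    have h1 : (Q.roots.map fun r => (z - r)⁻¹ * P).sum = S * P := by
      rw [hS, Multiset.sum_map_mul_right]
    rw [hdz, h1] at key
    rcases mul_eq_zero.mp key.symm with h2 | h2
    · exact absurd h2 (leadingCoeff_ne_zero.mpr hQ0)
    · exact (mul_eq_zero.mp h2).resolve_right hPne
  set T : ℝ := (Q.roots.map fun r => (Complex.normSq (z - r))⁻¹).sum with hT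
  have hTpos : 0 < T := by
    apply msum_pos
    · intro x hx
      obtain ⟨r, hr, rfl⟩ := Multiset.mem_map.mp hx
      exact inv_pos.mpr (Complex.normSq_pos.mpr (hsub r hr))
    · simpa [Multiset.map_eq_zero] using hroots0
  have hSim : S.im = -z.im * T := by
    rw [hS, hT]
    have h1 : ((Q.roots.map fun r => (z - r)⁻¹).sum).im
        = (Q.roots.map fun r => ((z - r)⁻¹).im).sum := by
      rw [show ((Q.roots.map fun r => (z - r)⁻¹).sum).im
          = Complex.imAddGroupHom ((Q.roots.map fun r => (z - r)⁻¹).sum) from rfl,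
        map_multiset_sum, Multiset.map_map]
      rfl
    rw [h1, ← Multiset.sum_map_mul_left]
    apply congrArg
    apply Multiset.map_congr rfl
    intro r hr
    rw [Complex.inv_im, Complex.sub_im, hroots r hr, sub_zero, div_eq_mul_inv, neg_mul]
  rw [hS0] at hSim
  simp only [Complex.zero_im] at hSim
  have := hSim.symm
  rcases mul_eq_zero.mp this with h2 | h2
  · exact him (by linarith [neg_eq_zero.mp h2])
  · exact absurd h2 hTpos.ne'

open Finset in
private lemma esymm_deriv {n m : ℕ} (x : Fin n → ℝ) :
    derivative (∑ s ∈ powersetCard (m+1) (univ : Finset (Fin n)),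
        ∏ i ∈ s, (C (x i) + X)) =
      (n - m : ℕ) • ∑ t ∈ powersetCard m (univ : Finset (Fin n)),
        ∏ i ∈ t, (C (x i) + X) := by
  rw [derivative_sum]
  have h1 : ∀ s ∈ powersetCard (m+1) (univ : Finset (Fin n)),
      derivative (∏ i ∈ s, (C (x i) + X))
        = ∑ i ∈ s, ∏ j ∈ s.erase i, (C (x j) + X) := by
    intro s _
    rw [Finset.prod_eq_multiset_prod, derivative_prod, Finset.sum_eq_multiset_sum]
    apply congrArg
    apply Multiset.map_congr rfl
    intro i _
    simp [Finset.prod_eq_multiset_prod, Finset.erase_val]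
  rw [Finset.sum_congr rfl h1, smul_sum]
  have h2 : ∀ t ∈ powersetCard m (univ : Finset (Fin n)),
      (n - m : ℕ) • ∏ i ∈ t, (C (x i) + X)
        = ∑ i ∈ tᶜ, ∏ j ∈ t, (C (x j) + X) := by
    intro t ht
    rw [Finset.sum_const, Finset.card_compl, (Finset.mem_powersetCard.mp ht).2, Fintype.card_fin]
  rw [Finset.sum_congr rfl h2, Finset.sum_sigma', Finset.sum_sigma']
  refine Finset.sum_nbij' (fun p => ⟨p.1.erase p.2, p.2⟩) (fun p => ⟨insert p.2 p.1, p.2⟩)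
    ?_ ?_ ?_ ?_ ?_
  · rintro ⟨s, i⟩ hp
    simp only [Finset.mem_sigma, Finset.mem_powersetCard, Finset.mem_compl] at hp ⊢
    obtain ⟨⟨-, hcard⟩, hi⟩ := hp
    exact ⟨⟨Finset.subset_univ _, by rw [Finset.card_erase_of_mem hi, hcard]; omega⟩,
      Finset.notMem_erase _ _⟩
  · rintro ⟨t, i⟩ hp
    simp only [Finset.mem_sigma, Finset.mem_powersetCard, Finset.mem_compl] at hp ⊢
    obtain ⟨⟨-, hcard⟩, hi⟩ := hp
    exact ⟨⟨Finset.subset_univ _, by rw [Finset.card_insert_of_notMem hi, hcard]⟩,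
      Finset.mem_insert_self _ _⟩
  · rintro ⟨s, i⟩ hp
    simp only [Finset.mem_sigma, Finset.mem_powersetCard] at hp
    exact Sigma.ext (by simp [Finset.insert_erase hp.2]) (by simp)
  · rintro ⟨t, i⟩ hp
    simp only [Finset.mem_sigma, Finset.mem_powersetCard, Finset.mem_compl] at hp
    exact Sigma.ext (by simp [Finset.erase_insert hp.2]) (by simp)
  · rintro ⟨s, i⟩ _
    rfl

open Finset in
private lemma esymm_hyp {n : ℕ} (x : Fin n → ℝ) :
    ∀ d m : ℕ, m + d = n →
      ((∑ s ∈ powersetCard m (univ : Finset (Fin n)), ∏ i ∈ s, (C (x i) + X)).natDegree = m ∧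
       ∀ z : ℂ, aeval z (∑ s ∈ powersetCard m (univ : Finset (Fin n)),
          ∏ i ∈ s, (C (x i) + X)) = 0 → z.im = 0) := by
  intro d
  induction d with
  | zero =>
    intro m hm
    rw [Nat.add_zero] at hm
    subst hm
    have huniv : powersetCard m (univ : Finset (Fin m)) = {univ} := by
      simpa using Finset.powersetCard_self (univ : Finset (Fin m))
    rw [huniv, Finset.sum_singleton]
    have hmon : ∀ i ∈ (univ : Finset (Fin m)), (C (x i) + X).Monic := by
      intro i _
      rw [add_comm]
      exact monic_X_add_C _
    constructor
    · rw [natDegree_prod_of_monic _ _ hmon]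
      have : ∀ i ∈ (univ : Finset (Fin m)), (C (x i) + X).natDegree = 1 := by
        intro i _; rw [add_comm]; exact natDegree_X_add_C _
      rw [Finset.sum_congr rfl this, Finset.sum_const, Finset.card_univ, Fintype.card_fin,
        smul_eq_mul, mul_one]
    · intro z hz
      rw [map_prod] at hz
      obtain ⟨i, -, hi⟩ := Finset.prod_eq_zero_iff.mp hz
      simp only [map_add, aeval_C, aeval_X] at hi
      have hz' : z = -((algebraMap ℝ ℂ) (x i)) := by linear_combination hi
      rw [hz']
      simp
  | succ d ih =>
    intro m hm
    obtain ⟨hdeg, hroots⟩ := ih (m + 1) (by omega)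
    set q : ℝ[X] := ∑ s ∈ powersetCard (m+1) (univ : Finset (Fin n)),
        ∏ i ∈ s, (C (x i) + X) with hq
    set p : ℝ[X] := ∑ s ∈ powersetCard m (univ : Finset (Fin n)),
        ∏ i ∈ s, (C (x i) + X) with hp
    have hd : derivative q = (n - m : ℕ) • p := esymm_deriv x
    have hq0 : q.natDegree ≠ 0 := by rw [hdeg]; omega
    have hc : (0 : ℝ) < ((n - m : ℕ) : ℝ) := by
      have : 0 < n - m := by omega
      exact_mod_cast this
    have hsmul : ((n - m : ℕ) • p) = C ((n - m : ℕ) : ℝ) * p := by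
      rw [nsmul_eq_mul]; simp
    have hdd : (derivative q).natDegree = m := by
      have h1 : degree (derivative q) = ((m + 1) - 1 : ℕ) := by
        rw [← hdeg]
        exact degree_derivative_eq q (by omega)
      exact natDegree_eq_of_degree_eq_some (by simpa using h1)
    constructor
    · have : (C ((n - m : ℕ) : ℝ) * p).natDegree = m := by
        rw [← hsmul, ← hd, hdd]
      rwa [natDegree_C_mul hc.ne'] at this
    · intro z hz
      apply deriv_real_roots hq0 hroots
      rw [hd, map_nsmul, hz, smul_zero]

/-- The elementary symmetric polynomials are hyperbolic with respect to
`𝟙 = (1,…,1)`: `E_k(𝟙) > 0` and for every `x ∈ ℝⁿ` the univariate polynomial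
`t ↦ E_k(x₁ + t, …, xₙ + t)` has degree `k` and only real roots. -/
theorem stmt15 {n k : ℕ} (hk : 1 ≤ k) (hkn : k ≤ n) :
    (0 < ∑ s ∈ Finset.powersetCard k (Finset.univ : Finset (Fin n)),
          ∏ i ∈ s, (1 : ℝ)) ∧
    ∀ x : Fin n → ℝ,
      (∑ s ∈ Finset.powersetCard k (Finset.univ : Finset (Fin n)),
          ∏ i ∈ s, (Polynomial.C (x i) + Polynomial.X)).natDegree = k ∧
      ∀ z : ℂ,
        Polynomial.aeval z
          (∑ s ∈ Finset.powersetCard k (Finset.univ : Finset (Fin n)),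
            ∏ i ∈ s, (Polynomial.C (x i) + Polynomial.X)) = 0 → z.im = 0 := by
  constructor
  · have h1 : ∀ s ∈ Finset.powersetCard k (Finset.univ : Finset (Fin n)),
        (∏ i ∈ s, (1 : ℝ)) = 1 := fun s _ => Finset.prod_const_one
    rw [Finset.sum_congr rfl h1, Finset.sum_const, Finset.card_powersetCard,
      Finset.card_univ, Fintype.card_fin, nsmul_eq_mul, mul_one]
    exact_mod_cast Nat.choose_pos hkn
  · intro x
    exact esymm_hyp x (n - k) k (by omega)
end
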